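/- arXiv:2012.12328 — 2 statements merged into one kernel-verified Lean document; each statement's English description precedes it below -/
import Mathlib

section
/- Let R be a principal ideal domain and n ≥ 3. If Sp₄(R) and Sp_{2n}(R) are generated by their root elements and every element of Sp₄(R) (embedded in Sp_{2n}(R)) is a product of at most K conjugates of root elements, then every element of Sp_{2n}(R) is a product of at most 12(n−2) + K conjugates of root elements, i.e. ‖Sp_{2n}(R)‖_{EL_Q} ≤ 12(n−2) + K. -/
open Matrix

/-- The standard symplectic form matrix `J = [[0, Iₙ], [-Iₙ, 0]]`. -/
def Jmat (n : ℕ) (R : Type*) [CommRing R] :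
    Matrix (Fin n ⊕ Fin n) (Fin n ⊕ Fin n) R :=
  fromBlocks 0 1 (-1) 0

/-- `A ∈ Sp_{2n}(R)`, i.e. `AᵀJA = J`. -/
def IsSymp {n : ℕ} {R : Type*} [CommRing R]
    (A : Matrix (Fin n ⊕ Fin n) (Fin n ⊕ Fin n) R) : Prop :=
  Aᵀ * Jmat n R * A = Jmat n R

/-- The root elements of `Sp_{2n}(R)` for the positive roots of `C_n`. -/
def PosRootElems (n : ℕ) (R : Type*) [CommRing R] :
    Set (Matrix (Fin n ⊕ Fin n) (Fin n ⊕ Fin n) R) :=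
  {M | ∃ t : R,
    (∃ i j : Fin n, i < j ∧ M = 1 + t • (single (Sum.inl i) (Sum.inl j) 1 -
        single (Sum.inr j) (Sum.inr i) 1)) ∨
    (∃ i j : Fin n, i < j ∧ M = 1 + t • (single (Sum.inl i) (Sum.inr j) 1 +
        single (Sum.inl j) (Sum.inr i) 1)) ∨
    (∃ i : Fin n, M = 1 + t • single (Sum.inl i) (Sum.inr i) 1)}

/-- The root elements of `Sp_{2n}(R)` for the negative roots of `C_n`. -/
def NegRootElems (n : ℕ) (R : Type*) [CommRing R] :
    Set (Matrix (Fin n ⊕ Fin n) (Fin n ⊕ Fin n) R) :=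
  {M | ∃ t : R,
    (∃ i j : Fin n, j < i ∧ M = 1 + t • (single (Sum.inl i) (Sum.inl j) 1 -
        single (Sum.inr j) (Sum.inr i) 1)) ∨
    (∃ i j : Fin n, i < j ∧ M = 1 + t • (single (Sum.inr j) (Sum.inl i) 1 +
        single (Sum.inr i) (Sum.inl j) 1)) ∨
    (∃ i : Fin n, M = 1 + t • single (Sum.inr i) (Sum.inl i) 1)}

/-- All root elements of `Sp_{2n}(R)`. -/
def RootElems (n : ℕ) (R : Type*) [CommRing R] :
    Set (Matrix (Fin n ⊕ Fin n) (Fin n ⊕ Fin n) R) :=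
  PosRootElems n R ∪ NegRootElems n R

/-- `EL_Q`: all conjugates of root elements by symplectic matrices. -/
def ELQ (n : ℕ) (R : Type*) [CommRing R] :
    Set (Matrix (Fin n ⊕ Fin n) (Fin n ⊕ Fin n) R) :=
  {M | ∃ E ∈ RootElems n R, ∃ g, IsSymp g ∧ M = g * E * g⁻¹}

/-- The copy of `Sp₄(R)` in `Sp_{2n}(R)` supported on the coordinates
`n−1, n, 2n−1, 2n`. -/
def EmbSp4 (n : ℕ) (hn : 2 ≤ n) (R : Type*) [CommRing R] :
    Set (Matrix (Fin n ⊕ Fin n) (Fin n ⊕ Fin n) R) :=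
  {M | IsSymp M ∧ ∀ p q : Fin n ⊕ Fin n,
    (p ∉ ({Sum.inl ⟨n - 2, by omega⟩, Sum.inl ⟨n - 1, by omega⟩,
           Sum.inr ⟨n - 2, by omega⟩, Sum.inr ⟨n - 1, by omega⟩} :
        Set (Fin n ⊕ Fin n)) ∨
     q ∉ ({Sum.inl ⟨n - 2, by omega⟩, Sum.inl ⟨n - 1, by omega⟩,
           Sum.inr ⟨n - 2, by omega⟩, Sum.inr ⟨n - 1, by omega⟩} :
        Set (Fin n ⊕ Fin n))) →
    M p q = (1 : Matrix (Fin n ⊕ Fin n) (Fin n ⊕ Fin n) R) p q}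

namespace Stmt16

variable {n : ℕ} {R : Type*} [CommRing R]

abbrev Idx (n : ℕ) := Fin n ⊕ Fin n

def sv (p : Idx n) : Idx n → R := fun q => if q = p then 1 else 0

def idx : Idx n → ℕ := Sum.elim Fin.val Fin.val

def om (x y : Idx n → R) : R := x ⬝ᵥ (Jmat n R).mulVec y

def Tv (u : Idx n → R) (t : R) : Matrix (Idx n) (Idx n) R :=
  1 + t • vecMulVec u ((Jmat n R).mulVec u)

theorem Jmat_mulVec (y : Idx n → R) :
    (Jmat n R).mulVec y = Sum.elim (fun i => y (Sum.inr i)) (fun i => -(y (Sum.inl i))) := by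
  funext p
  cases p with
  | inl i =>
      simp [Jmat, mulVec, dotProduct, Fintype.sum_sum_type, fromBlocks, one_apply]
  | inr i =>
      simp [Jmat, mulVec, dotProduct, Fintype.sum_sum_type, fromBlocks, one_apply]

theorem om_eq_sum (x y : Idx n → R) :
    om x y = ∑ i, (x (Sum.inl i) * y (Sum.inr i) - x (Sum.inr i) * y (Sum.inl i)) := by
  unfold om
  rw [Jmat_mulVec, dotProduct, Fintype.sum_sum_type]
  simp only [Sum.elim_inl, Sum.elim_inr, mul_neg]
  rw [Finset.sum_sub_distrib, sub_eq_add_neg, ← Finset.sum_neg_distrib]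

theorem om_self (x : Idx n → R) : om x x = 0 := by
  rw [om_eq_sum]
  exact Finset.sum_eq_zero fun i _ => by ring

theorem om_skew (x y : Idx n → R) : om y x = -om x y := by
  simp only [om_eq_sum]
  rw [← Finset.sum_neg_distrib]
  exact Finset.sum_congr rfl fun i _ => by ring

theorem om_add_right (x y z : Idx n → R) : om x (y + z) = om x y + om x z := by
  simp only [om_eq_sum, Pi.add_apply]
  rw [← Finset.sum_add_distrib]
  exact Finset.sum_congr rfl fun i _ => by ring

theorem om_smul_right (x y : Idx n → R) (c : R) : om x (c • y) = c * om x y := by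
  simp only [om_eq_sum, Pi.smul_apply, smul_eq_mul]
  rw [Finset.mul_sum]
  exact Finset.sum_congr rfl fun i _ => by ring

theorem om_sub_right (x y z : Idx n → R) : om x (y - z) = om x y - om x z := by
  simp only [om_eq_sum, Pi.sub_apply]
  rw [← Finset.sum_sub_distrib]
  exact Finset.sum_congr rfl fun i _ => by ring

theorem om_sv_inl (x : Idx n → R) (i : Fin n) : om x (sv (Sum.inl i)) = -(x (Sum.inr i)) := by
  simp [om_eq_sum, sv, Finset.sum_sub_distrib]

theorem om_sv_inr (x : Idx n → R) (i : Fin n) : om x (sv (Sum.inr i)) = x (Sum.inl i) := by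
  simp [om_eq_sum, sv, Finset.sum_sub_distrib]

theorem sv_inl_om (x : Idx n → R) (i : Fin n) : om (sv (Sum.inl i)) x = x (Sum.inr i) := by
  rw [om_skew, om_sv_inl]; ring

theorem sv_inr_om (x : Idx n → R) (i : Fin n) : om (sv (Sum.inr i)) x = -(x (Sum.inl i)) := by
  rw [om_skew, om_sv_inr]

/-! ### vecMulVec kit -/

theorem vmv_mulVec (a b x : Idx n → R) : (vecMulVec a b).mulVec x = (b ⬝ᵥ x) • a := by
  funext p
  simp only [mulVec, dotProduct, vecMulVec_apply, Pi.smul_apply, smul_eq_mul]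
  rw [Finset.sum_mul]
  exact Finset.sum_congr rfl fun q _ => by ring

theorem mul_vmv (M : Matrix (Idx n) (Idx n) R) (a b : Idx n → R) :
    M * vecMulVec a b = vecMulVec (M.mulVec a) b := by
  ext p q
  simp only [mul_apply, vecMulVec_apply, mulVec, dotProduct]
  rw [Finset.sum_mul]
  exact Finset.sum_congr rfl fun r _ => by ring

theorem vmv_mul (a b : Idx n → R) (M : Matrix (Idx n) (Idx n) R) :
    vecMulVec a b * M = vecMulVec a (vecMul b M) := by
  ext p q
  simp only [mul_apply, vecMulVec_apply, vecMul, dotProduct]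
  rw [Finset.mul_sum]
  exact Finset.sum_congr rfl fun r _ => by ring

theorem vmv_transpose (a b : Idx n → R) : (vecMulVec a b)ᵀ = vecMulVec b a := by
  ext p q
  simp [vecMulVec_apply, transpose_apply, mul_comm]

theorem vmv_mul_vmv (a b c d : Idx n → R) :
    vecMulVec a b * vecMulVec c d = (b ⬝ᵥ c) • vecMulVec a d := by
  rw [vmv_mul]
  ext p q
  simp only [vecMulVec_apply, vecMul, dotProduct, Matrix.smul_apply, smul_eq_mul]
  rw [Finset.mul_sum, Finset.sum_mul]
  exact Finset.sum_congr rfl fun r _ => by ring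

theorem vmv_smul_right (a : Idx n → R) (r : R) (b : Idx n → R) :
    vecMulVec a (r • b) = r • vecMulVec a b := by
  ext p q
  simp [vecMulVec_apply]
  ring

theorem vmv_neg_right (a b : Idx n → R) : vecMulVec a (-b) = -vecMulVec a b := by
  ext p q
  simp [vecMulVec_apply]

/-! ### J facts -/

theorem fromBlocks_neg' (A B C D : Matrix (Fin n) (Fin n) R) :
    fromBlocks (-A) (-B) (-C) (-D) = -fromBlocks A B C D := by
  ext p q
  cases p <;> cases q <;> simp

theorem Jmat_transpose : (Jmat n R)ᵀ = -Jmat n R := by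
  rw [Jmat, fromBlocks_transpose, ← fromBlocks_neg']
  congr 1 <;> simp

theorem Jmat_mul_Jmat : (Jmat n R) * Jmat n R = -1 := by
  rw [Jmat, fromBlocks_multiply, ← fromBlocks_one (m := Fin n) (α := R), ← fromBlocks_neg']
  congr 1 <;> simp

theorem vecMul_Jmat (b : Idx n → R) : vecMul b (Jmat n R) = -((Jmat n R).mulVec b) := by
  rw [← mulVec_transpose, Jmat_transpose, neg_mulVec]

/-! ### Tv basics -/

theorem Tv_mulVec (u : Idx n → R) (t : R) (x : Idx n → R) :
    (Tv u t).mulVec x = x + (t * om x u) • u := by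
  unfold Tv om
  rw [add_mulVec, one_mulVec, smul_mulVec, vmv_mulVec, smul_smul, dotProduct_comm]

theorem Tv_zero (u : Idx n → R) : Tv u 0 = 1 := by
  simp [Tv]

theorem Tv_zero_vec (t : R) : Tv (0 : Idx n → R) t = 1 := by
  have h : vecMulVec (0 : Idx n → R) (0 : Idx n → R) = 0 := by
    ext p q; simp [vecMulVec_apply]
  simp [Tv, h]

theorem J_dot_self (u : Idx n → R) : ((Jmat n R).mulVec u) ⬝ᵥ u = 0 := by
  rw [dotProduct_comm]; exact om_self u

theorem Tv_mul_same (u : Idx n → R) (t s : R) : Tv u t * Tv u s = Tv u (t + s) := by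
  unfold Tv
  have h0 : ((Jmat n R).mulVec u) ⬝ᵥ u = 0 := J_dot_self u
  rw [add_mul, mul_add, mul_add, one_mul, mul_one, one_mul]
  rw [smul_mul_assoc, mul_smul_comm, vmv_mul_vmv, h0, zero_smul, smul_zero, smul_zero, add_smul]
  abel

theorem Tv_smul_vec (c : R) (u : Idx n → R) (t : R) : Tv (c • u) t = Tv u (t * (c * c)) := by
  unfold Tv
  have h : vecMulVec (c • u) ((Jmat n R).mulVec (c • u)) =
      (c * c) • vecMulVec u ((Jmat n R).mulVec u) := by
    rw [mulVec_smul, vmv_smul_right]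
    ext p q
    simp [vecMulVec_apply, Pi.smul_apply, smul_eq_mul]
    ring
  rw [h, smul_smul]

theorem isSymp_Tv (u : Idx n → R) (t : R) : IsSymp (Tv u t) := by
  unfold IsSymp Tv
  set c := (Jmat n R).mulVec u with hc
  have hcu : c ⬝ᵥ u = 0 := J_dot_self u
  have h1 : (1 + t • vecMulVec u c)ᵀ = 1 + t • vecMulVec c u := by
    rw [transpose_add, transpose_one, transpose_smul, vmv_transpose]
  have h2 : vecMulVec c u * Jmat n R = -vecMulVec c c := by
    rw [vmv_mul, vecMul_Jmat, ← hc, vmv_neg_right]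
  have h3 : Jmat n R * vecMulVec u c = vecMulVec c c := by rw [mul_vmv, ← hc]
  have h5 : vecMulVec c u * Jmat n R * vecMulVec u c = 0 := by
    rw [h2, neg_mul, vmv_mul_vmv, hcu, zero_smul, neg_zero]
  calc (1 + t • vecMulVec u c)ᵀ * Jmat n R * (1 + t • vecMulVec u c)
      = Jmat n R + t • (Jmat n R * vecMulVec u c) + t • (vecMulVec c u * Jmat n R)
          + t • (t • (vecMulVec c u * Jmat n R * vecMulVec u c)) := by
        simp only [h1, add_mul, mul_add, one_mul, mul_one, smul_mul_assoc, mul_smul_comm,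
          smul_add, smul_smul]
        abel
    _ = Jmat n R := by
        rw [h3, h5, h2, smul_zero, smul_zero, smul_neg]
        abel

/-! ### IsSymp basics -/

theorem isSymp_one : IsSymp (1 : Matrix (Idx n) (Idx n) R) := by
  unfold IsSymp; simp

theorem isSymp_mul {A B : Matrix (Idx n) (Idx n) R} (hA : IsSymp A) (hB : IsSymp B) :
    IsSymp (A * B) := by
  unfold IsSymp at *
  rw [transpose_mul]
  calc Bᵀ * Aᵀ * (Jmat n R) * (A * B) = Bᵀ * (Aᵀ * Jmat n R * A) * B := by
        simp only [Matrix.mul_assoc]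
      _ = Jmat n R := by rw [hA, hB]

theorem isSymp_left_inv {M : Matrix (Idx n) (Idx n) R} (h : IsSymp M) :
    (-(Jmat n R) * Mᵀ * Jmat n R) * M = 1 := by
  have e : (-(Jmat n R) * Mᵀ * Jmat n R) * M = -(Jmat n R) * (Mᵀ * Jmat n R * M) := by
    simp only [Matrix.mul_assoc]
  rw [e, h, neg_mul, Jmat_mul_Jmat, neg_neg]

theorem isSymp_isUnit_det {M : Matrix (Idx n) (Idx n) R} (h : IsSymp M) : IsUnit M.det :=
  Matrix.isUnit_det_of_left_inverse (isSymp_left_inv h)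

theorem isSymp_mul_inv {M : Matrix (Idx n) (Idx n) R} (h : IsSymp M) : M * M⁻¹ = 1 :=
  Matrix.mul_nonsing_inv M (isSymp_isUnit_det h)

theorem isSymp_inv_mul {M : Matrix (Idx n) (Idx n) R} (h : IsSymp M) : M⁻¹ * M = 1 :=
  Matrix.nonsing_inv_mul M (isSymp_isUnit_det h)

theorem isSymp_inv {M : Matrix (Idx n) (Idx n) R} (h : IsSymp M) : IsSymp M⁻¹ := by
  unfold IsSymp
  have key : (M⁻¹)ᵀ * (Mᵀ * Jmat n R * M) * M⁻¹ = Jmat n R := by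
    calc (M⁻¹)ᵀ * (Mᵀ * Jmat n R * M) * M⁻¹
        = (M * M⁻¹)ᵀ * Jmat n R * (M * M⁻¹) := by
          rw [transpose_mul]
          simp only [Matrix.mul_assoc]
      _ = Jmat n R := by rw [isSymp_mul_inv h]; simp
  rw [h] at key
  exact key

/-! ### conjugation and invariance -/

theorem isSymp_transfer {g : Matrix (Idx n) (Idx n) R} (h : IsSymp g) :
    (g⁻¹)ᵀ * Jmat n R = Jmat n R * g := by
  calc (g⁻¹)ᵀ * Jmat n R = (g⁻¹)ᵀ * (gᵀ * Jmat n R * g) := by rw [h]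
    _ = (g * g⁻¹)ᵀ * Jmat n R * g := by
        rw [transpose_mul]
        simp only [Matrix.mul_assoc]
    _ = Jmat n R * g := by rw [isSymp_mul_inv h]; simp

theorem conj_Tv {g : Matrix (Idx n) (Idx n) R} (h : IsSymp g) (u : Idx n → R) (t : R) :
    g * Tv u t * g⁻¹ = Tv (g.mulVec u) t := by
  unfold Tv
  have hv : vecMul ((Jmat n R).mulVec u) g⁻¹ = (Jmat n R).mulVec (g.mulVec u) := by
    rw [← mulVec_transpose, mulVec_mulVec, isSymp_transfer h, ← mulVec_mulVec]
  rw [mul_add, mul_one, add_mul, isSymp_mul_inv h, mul_smul_comm, smul_mul_assoc,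
      mul_vmv, vmv_mul, hv]

theorem om_mulVec {M : Matrix (Idx n) (Idx n) R} (h : IsSymp M) (x y : Idx n → R) :
    om (M.mulVec x) (M.mulVec y) = om x y := by
  unfold om
  rw [mulVec_mulVec, dotProduct_mulVec, dotProduct_mulVec]
  congr 1
  rw [← vecMul_transpose, vecMul_vecMul, ← Matrix.mul_assoc, h]

/-! ### unimodularity -/

def Unimod (x : Idx n → R) : Prop := ∃ z, x ⬝ᵥ z = 1

theorem unimod_mulVec {A B : Matrix (Idx n) (Idx n) R} {x : Idx n → R}
    (hBA : B * A = 1) (h : Unimod x) : Unimod (A.mulVec x) := by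
  obtain ⟨z, hz⟩ := h
  refine ⟨Bᵀ.mulVec z, ?_⟩
  rw [dotProduct_mulVec, ← vecMul_transpose, vecMul_vecMul, ← transpose_mul, hBA,
    transpose_one, vecMul_one]
  exact hz

theorem unimod_sv (p : Idx n) : Unimod (sv p : Idx n → R) := by
  refine ⟨sv p, ?_⟩
  simp [sv, dotProduct]

theorem mulVec_sv (M : Matrix (Idx n) (Idx n) R) (p : Idx n) :
    M.mulVec (sv p) = fun q => M q p := by
  funext q
  simp [sv, mulVec, dotProduct, mul_ite]

theorem mulVec_sv_apply (M : Matrix (Idx n) (Idx n) R) (p q : Idx n) :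
    (M.mulVec (sv p)) q = M q p :=
  congrFun (mulVec_sv M p) q

/-! ### lists of transvections -/

def TvList (L : List ((Idx n → R) × R)) : Matrix (Idx n) (Idx n) R :=
  (L.map fun zt => Tv zt.1 zt.2).prod

theorem TvList_nil : TvList ([] : List ((Idx n → R) × R)) = 1 := rfl

theorem TvList_cons (zt : (Idx n → R) × R) (L : List ((Idx n → R) × R)) :
    TvList (zt :: L) = Tv zt.1 zt.2 * TvList L := by
  simp [TvList]

theorem TvList_append (L₁ L₂ : List ((Idx n → R) × R)) :
    TvList (L₁ ++ L₂) = TvList L₁ * TvList L₂ := by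
  simp [TvList]

theorem isSymp_TvList (L : List ((Idx n → R) × R)) : IsSymp (TvList L) := by
  induction L with
  | nil => exact isSymp_one
  | cons zt L ih => rw [TvList_cons]; exact isSymp_mul (isSymp_Tv _ _) ih

def invL (L : List ((Idx n → R) × R)) : List ((Idx n → R) × R) :=
  (L.map fun zt => (zt.1, -zt.2)).reverse

theorem invL_length (L : List ((Idx n → R) × R)) : (invL L).length = L.length := by
  simp [invL]

theorem TvList_invL (L : List ((Idx n → R) × R)) : TvList (invL L) * TvList L = 1 := by
  induction L with
  | nil => simp [invL, TvList_nil]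
  | cons zt L ih =>
      have h1 : invL (zt :: L) = invL L ++ [(zt.1, -zt.2)] := by simp [invL]
      rw [h1, TvList_append]
      simp only [TvList_cons, TvList_nil, mul_one]
      calc TvList (invL L) * Tv zt.1 (-zt.2) * (Tv zt.1 zt.2 * TvList L)
          = TvList (invL L) * (Tv zt.1 (-zt.2) * Tv zt.1 zt.2) * TvList L := by
            simp only [Matrix.mul_assoc]
        _ = 1 := by rw [Tv_mul_same, neg_add_cancel, Tv_zero, mul_one, ih]

theorem TvList_fix {L : List ((Idx n → R) × R)} {u : Idx n → R}
    (h : ∀ zt ∈ L, om u zt.1 = 0) : (TvList L).mulVec u = u := by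
  induction L with
  | nil => rw [TvList_nil, one_mulVec]
  | cons zt L ih =>
      rw [TvList_cons, ← mulVec_mulVec, ih fun x hx => h x (List.mem_cons_of_mem _ hx)]
      rw [Tv_mulVec, h zt (List.mem_cons_self), mul_zero, zero_smul, add_zero]

/-! ### PID arithmetic -/

section PID

variable [IsDomain R] [IsPrincipalIdealRing R]

theorem repr_of_mem_span {σ : Type*} [Fintype σ] (f : σ → R) (r : R)
    (h : r ∈ Ideal.span (Set.range f)) : ∃ c : σ → R, ∑ i, c i * f i = r := by
  exact Ideal.mem_span_range_iff_exists_fun.mp h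

theorem unimod_iff_span (x : Idx n → R) :
    Unimod x ↔ Ideal.span (Set.range x) = ⊤ := by
  constructor
  · rintro ⟨z, hz⟩
    rw [Ideal.eq_top_iff_one, ← hz]
    unfold dotProduct
    exact Ideal.sum_mem _ fun p _ =>
      Ideal.mul_mem_right _ _ (Ideal.subset_span ⟨p, rfl⟩)
  · intro h
    obtain ⟨c, hc⟩ := repr_of_mem_span x 1 (h ▸ Submodule.mem_top)
    refine ⟨c, ?_⟩
    rw [← hc]
    unfold dotProduct
    exact Finset.sum_congr rfl fun p _ => mul_comm _ _

theorem extract_primitive {x : Idx n → R} (hx : x ≠ 0) :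
    ∃ (d : R) (x₀ : Idx n → R), x = d • x₀ ∧ Unimod x₀ := by
  set I := Ideal.span (Set.range x) with hI
  have hprin : Submodule.IsPrincipal I := IsPrincipalIdealRing.principal I
  set d := Submodule.IsPrincipal.generator I with hd
  have hgen : Ideal.span {d} = I := Ideal.span_singleton_generator I
  have hdvd : ∀ p, d ∣ x p := fun p => by
    rw [← Ideal.mem_span_singleton, hgen]
    exact Ideal.subset_span ⟨p, rfl⟩
  choose x₀ hx₀ using hdvd
  have hd0 : d ≠ 0 := by
    intro h0
    apply hx
    funext p
    have := hx₀ p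
    rw [h0, zero_mul] at this
    exact this
  have hdI : d ∈ I := by rw [← hgen]; exact Ideal.subset_span rfl
  obtain ⟨c, hc⟩ := repr_of_mem_span x d hdI
  refine ⟨d, x₀, funext fun p => by rw [Pi.smul_apply, smul_eq_mul, ← hx₀ p], ?_⟩
  have hsum : ∑ p, c p * x p = d * ∑ p, c p * x₀ p := by
    rw [Finset.mul_sum]
    exact Finset.sum_congr rfl fun p _ => by rw [hx₀ p]; ring
  have h1 : ∑ p, c p * x₀ p = 1 := by
    apply mul_left_cancel₀ hd0
    rw [← hsum, hc, mul_one]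
  refine ⟨c, ?_⟩
  rw [← h1]
  unfold dotProduct
  exact Finset.sum_congr rfl fun p _ => mul_comm _ _

theorem span_le_singleton_of_dvd {a b c p : R} (ha : p ∣ a) (hb : p ∣ b) (hc : p ∣ c) :
    Ideal.span {a, b, c} ≤ Ideal.span {p} := by
  rw [Ideal.span_le]
  rintro y (rfl | rfl | rfl) <;> · rw [SetLike.mem_coe, Ideal.mem_span_singleton]; assumption

theorem evade (a b h : R) (hh : h ≠ 0) (hspan : Ideal.span {a, b, h} = ⊤) :
    ∃ t : R, Ideal.span {a + t * b, h} = ⊤ := by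
  classical
  letI : NormalizationMonoid R := UniqueFactorizationMonoid.normalizationMonoid.toNormalizationMonoid
  set s := (UniqueFactorizationMonoid.normalizedFactors h).toFinset.filter
    (fun q => ¬ q ∣ a) with hs
  set t := ∏ q ∈ s, q with ht
  refine ⟨t, ?_⟩
  have key : ∀ p : R, Prime p → p ∣ h → ¬ p ∣ (a + t * b) := by
    intro p pp ph pdvd
    by_cases pb : p ∣ b
    · have pa : ¬ p ∣ a := by
        intro pa
        have hle := span_le_singleton_of_dvd pa pb ph
        rw [hspan, top_le_iff, Ideal.span_singleton_eq_top] at hle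
        exact pp.not_unit hle
      apply pa
      have : p ∣ a + t * b - t * b := dvd_sub pdvd (pb.mul_left t)
      rwa [add_sub_cancel_right] at this
    · have pa_of : p ∣ a := by
        by_contra pa
        obtain ⟨q, hq, hassoc⟩ :=
          UniqueFactorizationMonoid.exists_mem_normalizedFactors_of_dvd hh pp.irreducible ph
        have hqa : ¬ q ∣ a := fun hqa => pa (hassoc.dvd.trans hqa)
        have hqs : q ∈ s := Finset.mem_filter.mpr ⟨Multiset.mem_toFinset.mpr hq, hqa⟩
        have pt : p ∣ t := hassoc.dvd.trans (Finset.dvd_prod_of_mem _ hqs)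
        have : p ∣ a + t * b - t * b := dvd_sub pdvd ((pt.mul_right b))
        rw [add_sub_cancel_right] at this
        exact pa this
      -- now p ∣ a, p ∤ b ⟹ p ∤ t
      have pt : ¬ p ∣ t := by
        intro pt
        obtain ⟨q, hqs, hpq⟩ := pp.exists_mem_finset_dvd pt
        have hq_mem := Finset.mem_filter.mp hqs
        have hqprime : Prime q := UniqueFactorizationMonoid.prime_of_normalized_factor q
          (Multiset.mem_toFinset.mp hq_mem.1)
        have hassoc : Associated p q := pp.associated_of_dvd hqprime hpq
        exact hq_mem.2 (hassoc.symm.dvd.trans pa_of)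
      have ptb : p ∣ t * b := by
        have : p ∣ a + t * b - a := dvd_sub pdvd pa_of
        rwa [add_sub_cancel_left] at this
      rcases pp.dvd_mul.mp ptb with h1 | h1
      · exact pt h1
      · exact pb h1
  by_contra hne
  obtain ⟨m, hmax, hle⟩ := Ideal.exists_le_maximal _ hne
  haveI : m.IsPrincipal := IsPrincipalIdealRing.principal m
  have hhm : h ∈ m := hle (Ideal.subset_span (by simp))
  have habm : a + t * b ∈ m := hle (Ideal.subset_span (by simp))
  have hmbot : m ≠ ⊥ := by
    intro hbot
    rw [hbot, Submodule.mem_bot] at hhm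
    exact hh hhm
  haveI : m.IsPrime := hmax.isPrime
  have hp : Prime (Submodule.IsPrincipal.generator m) :=
    Submodule.IsPrincipal.prime_generator_of_isPrime m hmbot
  have hd1 : Submodule.IsPrincipal.generator m ∣ h :=
    (Submodule.IsPrincipal.mem_iff_generator_dvd m).mp hhm
  have hd2 : Submodule.IsPrincipal.generator m ∣ (a + t * b) :=
    (Submodule.IsPrincipal.mem_iff_generator_dvd m).mp habm
  exact key _ hp hd1 hd2

end PID

/-! ### paths of transvections -/

def LeadsTo (C : (Idx n → R) → Prop) (m : ℕ) (x y : Idx n → R) : Prop :=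
  ∃ L : List ((Idx n → R) × R), L.length ≤ m ∧ (∀ zt ∈ L, C zt.1) ∧ (TvList L).mulVec x = y

theorem LeadsTo.refl (C : (Idx n → R) → Prop) (m : ℕ) (x : Idx n → R) : LeadsTo C m x x :=
  ⟨[], by simp, by simp, by rw [TvList_nil, one_mulVec]⟩

theorem LeadsTo.mono {C : (Idx n → R) → Prop} {m m' : ℕ} {x y : Idx n → R}
    (h : LeadsTo C m x y) (hm : m ≤ m') : LeadsTo C m' x y := by
  obtain ⟨L, h1, h2, h3⟩ := h
  exact ⟨L, h1.trans hm, h2, h3⟩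

theorem LeadsTo.step {C : (Idx n → R) → Prop} {m : ℕ} {x y : Idx n → R}
    {z : Idx n → R} {t : R} (hz : C z)
    (h : LeadsTo C m ((Tv z t).mulVec x) y) : LeadsTo C (m + 1) x y := by
  obtain ⟨L, h1, h2, h3⟩ := h
  refine ⟨L ++ [(z, t)], ?_, ?_, ?_⟩
  · simpa using Nat.add_le_add_right h1 1
  · intro zt hzt
    rcases List.mem_append.mp hzt with h' | h'
    · exact h2 zt h'
    · simp at h'
      rw [h']
      exact hz
  · rw [TvList_append, ← mulVec_mulVec]
    have : TvList [(z, t)] = Tv z t := by simp [TvList]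
    rw [this, h3]

theorem LeadsTo.single {C : (Idx n → R) → Prop} {x : Idx n → R}
    {z : Idx n → R} {t : R} (hz : C z) : LeadsTo C 1 x ((Tv z t).mulVec x) :=
  LeadsTo.step hz (LeadsTo.refl C 0 _)

theorem unimod_Tv {x : Idx n → R} (h : Unimod x) (z : Idx n → R) (t : R) :
    Unimod ((Tv z t).mulVec x) := by
  apply unimod_mulVec (B := Tv z (-t)) _ h
  rw [Tv_mul_same, neg_add_cancel, Tv_zero]

/-! ### the w-move -/

theorem move_w {k : Fin n} {w : Idx n → R}
    (hsupp : ∀ p, idx p < (k : ℕ) → w p = 0)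
    (hwk : w (Sum.inr k) = 1) :
    LeadsTo (fun z => (∀ p, idx p < (k : ℕ) → z p = 0) ∧ z (Sum.inr k) = 0) 2
      w (sv (Sum.inr k)) := by
  set z1 : Idx n → R := sv (Sum.inl k) with hz1
  set t1 : R := w (Sum.inl k) - 1 with ht1
  set x1 : Idx n → R := (Tv z1 t1).mulVec w with hx1
  have hx1eq : x1 = w + (-t1) • sv (Sum.inl k) := by
    rw [hx1, Tv_mulVec, hz1, om_sv_inl, hwk]
    congr 1
    rw [mul_neg_one, neg_smul]
  have hx1lk : x1 (Sum.inl k) = 1 := by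
    rw [hx1eq]
    simp [sv, ht1]
  have hx1rk : x1 (Sum.inr k) = 1 := by
    rw [hx1eq]
    simp [sv, hwk]
  set z2 : Idx n → R := x1 - sv (Sum.inr k) with hz2
  have hom2 : om x1 z2 = -1 := by
    rw [hz2, om_sub_right, om_self, om_sv_inr, hx1lk]
    ring
  have hstep2 : (Tv z2 1).mulVec x1 = sv (Sum.inr k) := by
    rw [Tv_mulVec, hom2, hz2]
    have : (1 * (-1) : R) • (x1 - sv (Sum.inr k)) = -(x1 - sv (Sum.inr k)) := by
      rw [one_mul, neg_smul, one_smul]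
    rw [this]
    abel
  have c1 : (∀ p, idx p < (k : ℕ) → z1 p = 0) ∧ z1 (Sum.inr k) = 0 := by
    constructor
    · intro p hp
      rw [hz1]
      have : p ≠ Sum.inl k := by
        intro h
        rw [h] at hp
        simp [idx] at hp
      simp [sv, this]
    · simp [hz1, sv]
  have c2 : (∀ p, idx p < (k : ℕ) → z2 p = 0) ∧ z2 (Sum.inr k) = 0 := by
    constructor
    · intro p hp
      have hw : w p = 0 := hsupp p hp
      have hsv1 : sv (Sum.inl k) p = (0 : R) := by
        have : p ≠ Sum.inl k := by
          intro h
          rw [h] at hp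
          simp [idx] at hp
        simp [sv, this]
      have hsv2 : sv (Sum.inr k) p = (0 : R) := by
        have : p ≠ Sum.inr k := by
          intro h
          rw [h] at hp
          simp [idx] at hp
        simp [sv, this]
      rw [hz2, Pi.sub_apply, hsv2, hx1eq, Pi.add_apply, hw, Pi.smul_apply, hsv1]
      simp
    · rw [hz2, Pi.sub_apply, hx1rk]
      simp [sv]
  exact LeadsTo.step c1 (LeadsTo.step c2 (by rw [hstep2]; exact LeadsTo.refl _ 0 _))

/-! ### more helper lemmas -/

theorem dot_sum_smul_sv {σ : Type*} [Fintype σ] (x : Idx n → R) (g : σ → R) (e : σ → Idx n) :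
    x ⬝ᵥ (∑ p, g p • sv (e p)) = ∑ p, g p * x (e p) := by
  unfold dotProduct
  simp only [Finset.sum_apply, Pi.smul_apply, smul_eq_mul, Finset.mul_sum]
  rw [Finset.sum_comm]
  apply Finset.sum_congr rfl
  intro p _
  have hite : ∀ q, x q * (g p * sv (e p) q) = if q = e p then g p * x q else 0 := by
    intro q
    by_cases hq : q = e p <;> simp [sv, hq] <;> ring
  simp only [hite]
  rw [Finset.sum_ite_eq' Finset.univ (e p) (fun q => g p * x q)]
  simp

theorem om_zero_right (x : Idx n → R) : om x 0 = 0 := by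
  simp [om_eq_sum]

theorem dot_sv (x : Idx n → R) (p : Idx n) : x ⬝ᵥ sv p = x p := by
  simp [sv, dotProduct, mul_ite]

theorem om_negJ (x ζ : Idx n → R) : om x (-(Jmat n R).mulVec ζ) = x ⬝ᵥ ζ := by
  unfold om
  rw [← neg_mulVec, mulVec_mulVec, mul_neg, Jmat_mul_Jmat, neg_neg, one_mulVec]

theorem negJ_apply_inl (ζ : Idx n → R) (i : Fin n) :
    (-(Jmat n R).mulVec ζ) (Sum.inl i) = -(ζ (Sum.inr i)) := by
  rw [Pi.neg_apply, Jmat_mulVec]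
  rfl

theorem negJ_apply_inr (ζ : Idx n → R) (i : Fin n) :
    (-(Jmat n R).mulVec ζ) (Sum.inr i) = ζ (Sum.inl i) := by
  rw [Pi.neg_apply, Jmat_mulVec]
  simp

/-! ### the v-move -/

section PID2

variable [IsDomain R] [IsPrincipalIdealRing R]

theorem move_v_core {k : Fin n} {x : Idx n → R}
    (hx : Unimod x) (hsupp : ∀ p, idx p < (k : ℕ) → x p = 0)
    (hT : ∃ p₀ : Idx n, (k : ℕ) < idx p₀ ∧ x p₀ ≠ 0) :
    LeadsTo (fun z => ∀ p, idx p < (k : ℕ) → z p = 0) 3 x (sv (Sum.inl k)) := by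
  classical
  obtain ⟨p₀, hp₀, hxp₀⟩ := hT
  set JT := Ideal.span (Set.range fun p : {p : Idx n // (k : ℕ) < idx p} => x p.1) with hJT
  haveI : JT.IsPrincipal := IsPrincipalIdealRing.principal JT
  set h := Submodule.IsPrincipal.generator JT with hh
  have hgen : Ideal.span {h} = JT := Ideal.span_singleton_generator JT
  have hmemJT : ∀ p : Idx n, (hp : (k : ℕ) < idx p) → x p ∈ JT := fun p hp =>
    Ideal.subset_span ⟨⟨p, hp⟩, rfl⟩
  have hne : h ≠ 0 := by
    intro h0
    have := hmemJT p₀ hp₀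
    rw [← hgen, h0, Ideal.span_singleton_eq_bot.mpr rfl, Submodule.mem_bot] at this
    exact hxp₀ this
  -- span {x rk, x lk, h} = ⊤
  have hspan3 : Ideal.span {x (Sum.inr k), x (Sum.inl k), h} = ⊤ := by
    rw [Ideal.eq_top_iff_one]
    obtain ⟨zz, hzz⟩ := hx
    rw [← hzz]
    unfold dotProduct
    apply Ideal.sum_mem
    intro p _
    rcases lt_trichotomy (idx p) (k : ℕ) with hlt | heq | hgt
    · rw [hsupp p hlt, zero_mul]
      exact Ideal.zero_mem _
    · have hmem : x p ∈ Ideal.span {x (Sum.inr k), x (Sum.inl k), h} := by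
        cases p with
        | inl i =>
            have : i = k := Fin.ext heq
            subst this
            exact Ideal.subset_span (by simp)
        | inr i =>
            have : i = k := Fin.ext heq
            subst this
            exact Ideal.subset_span (by simp)
      exact Ideal.mul_mem_right _ _ hmem
    · have h1 : x p ∈ Ideal.span {h} := by rw [hgen]; exact hmemJT p hgt
      rw [Ideal.mem_span_singleton] at h1
      have h2 : x p ∈ Ideal.span {x (Sum.inr k), x (Sum.inl k), h} := by
        rw [Ideal.mem_span_insert]
        refine ⟨0, x p, ?_, by ring⟩
        rw [Ideal.mem_span_insert]
        refine ⟨0, x p, ?_, by ring⟩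
        rw [Ideal.mem_span_singleton]
        exact h1
      exact Ideal.mul_mem_right _ _ h2
  obtain ⟨t, hts⟩ := evade _ _ _ hne hspan3
  -- step τ2
  set x' := (Tv (sv (Sum.inr k)) t).mulVec x with hx'
  have hx'eq : x' = x + (t * x (Sum.inl k)) • sv (Sum.inr k) := by
    rw [hx', Tv_mulVec, om_sv_inr]
  have hx'T : ∀ p : Idx n, p ≠ Sum.inr k → x' p = x p := by
    intro p hp
    rw [hx'eq, Pi.add_apply, Pi.smul_apply]
    simp [sv, hp]
  have hx'lk : x' (Sum.inl k) = x (Sum.inl k) := hx'T _ (by simp)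
  have hx'rk : x' (Sum.inr k) = x (Sum.inr k) + t * x (Sum.inl k) := by
    rw [hx'eq, Pi.add_apply, Pi.smul_apply]
    simp [sv]
  have hsupp' : ∀ p, idx p < (k : ℕ) → x' p = 0 := by
    intro p hp
    rw [hx'T p (by intro hh2; rw [hh2] at hp; simp [idx] at hp), hsupp p hp]
  -- the pair ideal is everything
  have hpair : Ideal.span {x' (Sum.inr k), h} = ⊤ := by rw [hx'rk]; exact hts
  set c : R := 1 - x' (Sum.inr k) with hc
  have hr0 : (1 - x' (Sum.inl k) * c) ∈ Ideal.span {x' (Sum.inr k), h} := by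
    rw [hpair]; exact Submodule.mem_top
  rw [Ideal.mem_span_pair] at hr0
  obtain ⟨a₁, a₂, ha⟩ := hr0
  have hJTmem : a₂ * h ∈ JT := by
    rw [← hgen]
    exact Ideal.mul_mem_left _ a₂ (Ideal.subset_span rfl)
  obtain ⟨μ, hμ⟩ := repr_of_mem_span _ _ hJTmem
  set ζT : Idx n → R := ∑ p : {p : Idx n // (k : ℕ) < idx p}, μ p • sv p.1 with hζT
  set ζ : Idx n → R := c • sv (Sum.inl k) + a₁ • sv (Sum.inr k) + ζT with hζ
  set z : Idx n → R := -(Jmat n R).mulVec ζ with hzdef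
  have hdotζT : x' ⬝ᵥ ζT = a₂ * h := by
    rw [hζT, dot_sum_smul_sv, ← hμ]
    apply Finset.sum_congr rfl
    intro p _
    congr 1
    apply hx'T
    intro hbad
    have : idx (p.1) = (k : ℕ) := by rw [hbad]; rfl
    omega
  have homz : om x' z = 1 := by
    rw [hzdef, om_negJ, hζ, dotProduct_add, dotProduct_add, dotProduct_smul, dotProduct_smul,
      dot_sv, dot_sv, hdotζT]
    simp only [smul_eq_mul]
    linear_combination ha
  -- evaluations of ζ and z
  have hζT_low : ∀ q : Idx n, idx q ≤ (k : ℕ) → ζT q = 0 := by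
    intro q hq
    rw [hζT, Finset.sum_apply]
    apply Finset.sum_eq_zero
    intro p _
    have hqp : q ≠ p.1 := by
      intro hqp
      have h2 := p.2
      rw [← hqp] at h2
      omega
    simp [Pi.smul_apply, sv, hqp]
  have hζ_lk : ζ (Sum.inl k) = c := by
    rw [hζ, Pi.add_apply, Pi.add_apply, hζT_low _ (by simp [idx])]
    simp [sv]
  have hζ_low : ∀ q, idx q < (k : ℕ) → ζ q = 0 := by
    intro q hq
    have h1 : q ≠ Sum.inl k := by intro hh2; rw [hh2] at hq; simp [idx] at hq
    have h2 : q ≠ Sum.inr k := by intro hh2; rw [hh2] at hq; simp [idx] at hq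
    rw [hζ, Pi.add_apply, Pi.add_apply, hζT_low _ (le_of_lt hq)]
    simp [sv, h1, h2]
  have hz_rk : z (Sum.inr k) = c := by rw [hzdef, negJ_apply_inr, hζ_lk]
  have hz_low : ∀ p, idx p < (k : ℕ) → z p = 0 := by
    intro p hp
    cases p with
    | inl i =>
        rw [hzdef, negJ_apply_inl, hζ_low (Sum.inr i) (by simpa [idx] using hp)]
        simp
    | inr i =>
        rw [hzdef, negJ_apply_inr, hζ_low (Sum.inl i) (by simpa [idx] using hp)]
  -- step τ3
  set x'' := (Tv z 1).mulVec x' with hx''def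
  have hx''eq : x'' = x' + z := by
    rw [hx''def, Tv_mulVec, homz, mul_one, one_smul]
  have hx''rk : x'' (Sum.inr k) = 1 := by
    rw [hx''eq, Pi.add_apply, hz_rk, hc]
    ring
  have hsupp'' : ∀ p, idx p < (k : ℕ) → x'' p = 0 := by
    intro p hp
    rw [hx''eq, Pi.add_apply, hsupp' p hp, hz_low p hp, add_zero]
  -- step τ4
  set z4 : Idx n → R := x'' - sv (Sum.inl k) with hz4
  have homz4 : om x'' z4 = 1 := by
    rw [hz4, om_sub_right, om_self, om_sv_inl, hx''rk]
    ring
  have hfin : (Tv z4 (-1)).mulVec x'' = sv (Sum.inl k) := by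
    rw [Tv_mulVec, homz4, hz4]
    have : ((-1 : R) * 1) • (x'' - sv (Sum.inl k)) = -(x'' - sv (Sum.inl k)) := by
      rw [mul_one, neg_smul, one_smul]
    rw [this]
    abel
  have hz4_low : ∀ p, idx p < (k : ℕ) → z4 p = 0 := by
    intro p hp
    have hsv : sv (Sum.inl k) p = (0 : R) := by
      have : p ≠ Sum.inl k := by intro hh2; rw [hh2] at hp; simp [idx] at hp
      simp [sv, this]
    rw [hz4, Pi.sub_apply, hsupp'' p hp, hsv, sub_zero]
  have c1 : ∀ p, idx p < (k : ℕ) → sv (Sum.inr k) p = (0 : R) := by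
    intro p hp
    have : p ≠ Sum.inr k := by intro hh2; rw [hh2] at hp; simp [idx] at hp
    simp [sv, this]
  exact LeadsTo.step c1 (LeadsTo.step hz_low (LeadsTo.step hz4_low
    (by rw [hfin]; exact LeadsTo.refl _ 0 _)))

theorem move_v {k : Fin n} (hk1 : (k : ℕ) + 1 < n) {v : Idx n → R}
    (hv : Unimod v) (hsupp : ∀ p, idx p < (k : ℕ) → v p = 0) :
    LeadsTo (fun z => ∀ p, idx p < (k : ℕ) → z p = 0) 4 v (sv (Sum.inl k)) := by
  by_cases hT : ∃ p₀ : Idx n, (k : ℕ) < idx p₀ ∧ v p₀ ≠ 0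
  · exact (move_v_core hv hsupp hT).mono (by omega)
  · push_neg at hT
    by_cases ha : v (Sum.inl k) = 0
    · obtain ⟨zz, hzz⟩ := hv
      have hsum : v ⬝ᵥ zz = v (Sum.inr k) * zz (Sum.inr k) := by
        unfold dotProduct
        apply Finset.sum_eq_single (Sum.inr k) ?_ (by simp)
        intro p _ hp
        have hv0 : v p = 0 := by
          rcases lt_trichotomy (idx p) (k : ℕ) with h1 | h1 | h1
          · exact hsupp p h1
          · cases p with
            | inl i =>
                have : i = k := Fin.ext h1
                subst this
                exact ha
            | inr i =>
                have : i = k := Fin.ext h1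
                subst this
                exact absurd rfl hp
          · exact hT p h1
        rw [hv0, zero_mul]
      rw [hsum] at hzz
      set z1 : Idx n → R := v - sv (Sum.inl k) with hz1
      have hom : om v z1 = v (Sum.inr k) := by
        rw [hz1, om_sub_right, om_self, om_sv_inl]
        ring
      have hstep : (Tv z1 (-(zz (Sum.inr k)))).mulVec v = sv (Sum.inl k) := by
        rw [Tv_mulVec, hom]
        have h1 : -(zz (Sum.inr k)) * v (Sum.inr k) = -1 := by
          rw [neg_mul, mul_comm, hzz]
        rw [h1, hz1]
        have h2 : ((-1 : R)) • (v - sv (Sum.inl k)) = -(v - sv (Sum.inl k)) := by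
          rw [neg_smul, one_smul]
        rw [h2]
        abel
      have c1 : ∀ p, idx p < (k : ℕ) → z1 p = 0 := by
        intro p hp
        have hsv : sv (Sum.inl k) p = (0 : R) := by
          have : p ≠ Sum.inl k := by intro hh2; rw [hh2] at hp; simp [idx] at hp
          simp [sv, this]
        rw [hz1, Pi.sub_apply, hsupp p hp, hsv, sub_zero]
      exact (LeadsTo.step c1 (by rw [hstep]; exact LeadsTo.refl _ 0 _)).mono (by omega)
    · set kk : Fin n := ⟨(k : ℕ) + 1, hk1⟩ with hkk
      set z0 : Idx n → R := sv (Sum.inr k) + sv (Sum.inl kk) with hz0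
      have hom0 : om v z0 = v (Sum.inl k) := by
        rw [hz0, om_add_right, om_sv_inr, om_sv_inl]
        have hvkk : v (Sum.inr kk) = 0 := hT _ (by simp [idx, hkk])
        rw [hvkk]
        ring
      set x1 := (Tv z0 1).mulVec v with hx1
      have hx1eq : x1 = v + v (Sum.inl k) • z0 := by
        rw [hx1, Tv_mulVec, hom0, one_mul]
      have hlkk_ne1 : (Sum.inl kk : Idx n) ≠ Sum.inr k := by simp
      have hlkk_ne2 : (Sum.inl kk : Idx n) ≠ Sum.inl k := by
        simp only [ne_eq, Sum.inl.injEq]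
        intro hh2
        have : (kk : ℕ) = (k : ℕ) := by rw [hh2]
        simp [hkk] at this
      have hx1kk : x1 (Sum.inl kk) = v (Sum.inl k) := by
        have hvlkk : v (Sum.inl kk) = 0 := hT _ (by simp [idx, hkk])
        rw [hx1eq, Pi.add_apply, hvlkk, Pi.smul_apply, hz0, Pi.add_apply]
        simp [sv, hlkk_ne1]
      have hx1u : Unimod x1 := unimod_Tv hv _ _
      have hsupp1 : ∀ p, idx p < (k : ℕ) → x1 p = 0 := by
        intro p hp
        have h1 : p ≠ Sum.inr k := by intro hh2; rw [hh2] at hp; simp [idx] at hp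
        have h2 : p ≠ Sum.inl kk := by
          intro hh2; rw [hh2] at hp; simp [idx, hkk] at hp
        rw [hx1eq, Pi.add_apply, hsupp p hp, Pi.smul_apply, hz0, Pi.add_apply]
        simp [sv, h1, h2]
      have hcore := move_v_core hx1u hsupp1
        ⟨Sum.inl kk, by simp [idx, hkk], by rw [hx1kk]; exact ha⟩
      have c0 : ∀ p, idx p < (k : ℕ) → z0 p = 0 := by
        intro p hp
        have h1 : p ≠ Sum.inr k := by intro hh2; rw [hh2] at hp; simp [idx] at hp
        have h2 : p ≠ Sum.inl kk := by
          intro hh2; rw [hh2] at hp; simp [idx, hkk] at hp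
        rw [hz0, Pi.add_apply]
        simp [sv, h1, h2]
      exact LeadsTo.step c0 (by rw [← hx1]; exact hcore)

theorem exists_symp_mulVec (hn : 1 < n) {u : Idx n → R} (hu : Unimod u) :
    ∃ g : Matrix (Idx n) (Idx n) R, IsSymp g ∧
      g.mulVec (sv (Sum.inl (⟨0, by omega⟩ : Fin n))) = u := by
  set k0 : Fin n := ⟨0, by omega⟩ with hk0
  have hzero : (k0 : ℕ) = 0 := rfl
  obtain ⟨L, _, _, hL⟩ := move_v (k := k0) (by omega) hu (fun p hp => by omega)
  refine ⟨TvList (invL L), isSymp_TvList _, ?_⟩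
  rw [← hL, mulVec_mulVec, TvList_invL, one_mulVec]

end PID2

/-! ### root elements and ELQ -/

theorem Tv_sv_long (i : Fin n) (s : R) :
    Tv (sv (Sum.inl i)) s =
      1 + (-s) • single (Sum.inl i) (Sum.inr i) (1 : R) := by
  unfold Tv
  have h : vecMulVec (sv (Sum.inl i) : Idx n → R) ((Jmat n R).mulVec (sv (Sum.inl i))) =
      -(single (Sum.inl i) (Sum.inr i) (1 : R)) := by
    ext p q
    rw [vecMulVec_apply, Jmat_mulVec]
    cases p with
    | inl a =>
        cases q with
        | inl b => simp [sv, Matrix.single]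
        | inr b =>
            by_cases hab : a = i
            · subst hab
              by_cases hbb : b = a
              · subst hbb
                simp [sv, Matrix.single]
              · simp [sv, Matrix.single, hbb, Ne.symm hbb]
            · simp [sv, Matrix.single, hab, Ne.symm hab]
    | inr a =>
        cases q with
        | inl b => simp [sv, Matrix.single]
        | inr b => simp [sv, Matrix.single]
  rw [h, smul_neg, ← neg_smul]

theorem Tv_long_mem_root (i : Fin n) (s : R) : Tv (sv (Sum.inl i)) s ∈ RootElems n R := by
  left
  exact ⟨-s, Or.inr (Or.inr ⟨i, Tv_sv_long i s⟩)⟩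

theorem one_mem_ELQ (hn : 0 < n) : (1 : Matrix (Idx n) (Idx n) R) ∈ ELQ n R := by
  refine ⟨1 + (0 : R) • single (Sum.inl (⟨0, hn⟩ : Fin n)) (Sum.inr ⟨0, hn⟩) (1 : R),
    ?_, 1, isSymp_one, ?_⟩
  · left
    exact ⟨0, Or.inr (Or.inr ⟨⟨0, hn⟩, rfl⟩)⟩
  · rw [zero_smul, add_zero, inv_one, one_mul, mul_one]

section PID3

variable [IsDomain R] [IsPrincipalIdealRing R]

theorem Tv_mem_ELQ (hn : 1 < n) (u : Idx n → R) (t : R) : Tv u t ∈ ELQ n R := by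
  by_cases hu : u = 0
  · rw [hu, Tv_zero_vec]
    exact one_mem_ELQ (by omega)
  · obtain ⟨d, u₀, hdu, hu₀⟩ := extract_primitive hu
    obtain ⟨g, hg, hgu⟩ := exists_symp_mulVec hn hu₀
    refine ⟨Tv (sv (Sum.inl (⟨0, by omega⟩ : Fin n))) (t * (d * d)), Tv_long_mem_root _ _,
      g, hg, ?_⟩
    rw [conj_Tv hg, hgu, ← Tv_smul_vec, ← hdu]

end PID3

/-! ### the main reduction -/

def Fix (M : Matrix (Idx n) (Idx n) R) (m : ℕ) : Prop :=
  ∀ j : Fin n, (j : ℕ) < m → M.mulVec (sv (Sum.inl j)) = sv (Sum.inl j) ∧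
    M.mulVec (sv (Sum.inr j)) = sv (Sum.inr j)

section PID4

variable [IsDomain R] [IsPrincipalIdealRing R]

theorem col_supp {M : Matrix (Idx n) (Idx n) R} (hM : IsSymp M) {k : ℕ}
    (hfix : Fix M k) (q : Idx n) :
    ∀ p, idx p < k → (M.mulVec (sv q)) p = 0 ∨
      (M.mulVec (sv q)) p = sv q p := by
  intro p hp
  cases p with
  | inl j =>
      have hj : (j : ℕ) < k := by simpa [idx] using hp
      have h1 : om (sv (Sum.inr j)) (M.mulVec (sv q)) = om (sv (Sum.inr j)) (sv q) := by
        nth_rewrite 1 [← (hfix j hj).2]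
        rw [om_mulVec hM]
      rw [sv_inr_om, sv_inr_om] at h1
      right
      have := neg_injective h1
      exact this
  | inr j =>
      have hj : (j : ℕ) < k := by simpa [idx] using hp
      have h1 : om (sv (Sum.inl j)) (M.mulVec (sv q)) = om (sv (Sum.inl j)) (sv q) := by
        nth_rewrite 1 [← (hfix j hj).1]
        rw [om_mulVec hM]
      rw [sv_inl_om, sv_inl_om] at h1
      right
      exact h1

theorem stage {k : Fin n} (hk1 : (k : ℕ) + 1 < n) {M : Matrix (Idx n) (Idx n) R}
    (hM : IsSymp M) (hfix : Fix M (k : ℕ)) :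
    ∃ L : List ((Idx n → R) × R), L.length ≤ 6 ∧ IsSymp (TvList L * M) ∧
      Fix (TvList L * M) ((k : ℕ) + 1) := by
  set v := M.mulVec (sv (Sum.inl k)) with hv
  have hvU : Unimod v := unimod_mulVec (isSymp_inv_mul hM) (unimod_sv _)
  have hvsupp : ∀ p, idx p < (k : ℕ) → v p = 0 := by
    intro p hp
    rcases col_supp hM hfix (Sum.inl k) p hp with h | h
    · exact h
    · rw [hv, h]
      have hpk : p ≠ Sum.inl k := by
        intro hh2
        rw [hh2] at hp
        simp [idx] at hp
      simp [sv, hpk]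
  obtain ⟨L₁, hlen₁, hC₁, hprod₁⟩ := move_v hk1 hvU hvsupp
  set M₁ := TvList L₁ * M with hM₁def
  have hM₁ : IsSymp M₁ := isSymp_mul (isSymp_TvList _) hM
  have hfix₁ : Fix M₁ (k : ℕ) := by
    intro j hj
    constructor
    · rw [hM₁def, ← mulVec_mulVec, (hfix j hj).1]
      exact TvList_fix fun zt hzt => by
        rw [sv_inl_om]
        exact hC₁ zt hzt (Sum.inr j) (by simpa [idx] using hj)
    · rw [hM₁def, ← mulVec_mulVec, (hfix j hj).2]
      exact TvList_fix fun zt hzt => by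
        rw [sv_inr_om, hC₁ zt hzt (Sum.inl j) (by simpa [idx] using hj), neg_zero]
  have hM₁lk : M₁.mulVec (sv (Sum.inl k)) = sv (Sum.inl k) := by
    rw [hM₁def, ← mulVec_mulVec, ← hv, hprod₁]
  set w := M₁.mulVec (sv (Sum.inr k)) with hw
  have hwsupp : ∀ p, idx p < (k : ℕ) → w p = 0 := by
    intro p hp
    rcases col_supp hM₁ hfix₁ (Sum.inr k) p hp with h | h
    · exact h
    · rw [hw, h]
      have hpk : p ≠ Sum.inr k := by
        intro hh2
        rw [hh2] at hp
        simp [idx] at hp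
      simp [sv, hpk]
  have hwrk : w (Sum.inr k) = 1 := by
    have h1 : om (sv (Sum.inl k)) w = 1 := by
      nth_rewrite 1 [← hM₁lk]
      rw [hw, om_mulVec hM₁, sv_inl_om]
      simp [sv]
    rw [sv_inl_om] at h1
    exact h1
  obtain ⟨L₂, hlen₂, hC₂, hprod₂⟩ := move_w hwsupp hwrk
  refine ⟨L₂ ++ L₁, ?_, ?_, ?_⟩
  · rw [List.length_append]
    omega
  · rw [TvList_append, Matrix.mul_assoc]
    exact isSymp_mul (isSymp_TvList _) hM₁
  · rw [TvList_append, Matrix.mul_assoc, ← hM₁def]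
    intro j hj
    rcases Nat.lt_or_ge (j : ℕ) (k : ℕ) with hlt | hge
    · have hj1 := (hfix₁ j hlt).1
      have hj2 := (hfix₁ j hlt).2
      constructor
      · rw [← mulVec_mulVec, hj1]
        exact TvList_fix fun zt hzt => by
          rw [sv_inl_om]
          exact (hC₂ zt hzt).1 (Sum.inr j) (by simpa [idx] using hlt)
      · rw [← mulVec_mulVec, hj2]
        exact TvList_fix fun zt hzt => by
          rw [sv_inr_om, (hC₂ zt hzt).1 (Sum.inl j) (by simpa [idx] using hlt), neg_zero]
    · have hjk : j = k := Fin.ext (by omega)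
      subst hjk
      constructor
      · rw [← mulVec_mulVec, hM₁lk]
        exact TvList_fix fun zt hzt => by
          rw [sv_inl_om]
          exact (hC₂ zt hzt).2
      · rw [← mulVec_mulVec, ← hw, hprod₂]

theorem iterate (m : ℕ) (hm : m + 2 ≤ n) (M : Matrix (Idx n) (Idx n) R) (hM : IsSymp M) :
    ∃ L : List ((Idx n → R) × R), L.length ≤ 6 * m ∧ IsSymp (TvList L * M) ∧
      Fix (TvList L * M) m := by
  induction m with
  | zero =>
      refine ⟨[], by simp, ?_, ?_⟩
      · rw [TvList_nil, one_mul]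
        exact hM
      · intro j hj
        omega
  | succ m ih =>
      obtain ⟨L, hlen, hsymp, hfix⟩ := ih (by omega)
      have hcast : ((⟨m, by omega⟩ : Fin n) : ℕ) = m := rfl
      obtain ⟨L', hlen', hsymp', hfix'⟩ := stage (k := (⟨m, by omega⟩ : Fin n))
        (by omega) hsymp (by rw [hcast]; exact hfix)
      refine ⟨L' ++ L, ?_, ?_, ?_⟩
      · rw [List.length_append]
        omega
      · rw [TvList_append, Matrix.mul_assoc]
        exact hsymp'
      · rw [TvList_append, Matrix.mul_assoc]
        intro j hj
        exact hfix' j (by omega)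

theorem fix_mem_EmbSp4 (hn : 3 ≤ n) {N : Matrix (Idx n) (Idx n) R}
    (hN : IsSymp N) (hfix : Fix N (n - 2)) :
    N ∈ EmbSp4 n (le_of_lt (by omega)) R := by
  refine ⟨hN, ?_⟩
  have hrow : ∀ (j : Fin n), (j : ℕ) < n - 2 → ∀ q : Idx n,
      N (Sum.inl j) q = (1 : Matrix (Idx n) (Idx n) R) (Sum.inl j) q ∧
      N (Sum.inr j) q = (1 : Matrix (Idx n) (Idx n) R) (Sum.inr j) q := by
    intro j hj q
    constructor
    · have h1 : om (sv (Sum.inr j)) (N.mulVec (sv q)) = om (sv (Sum.inr j)) (sv q) := by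
        nth_rewrite 1 [← (hfix j hj).2]
        rw [om_mulVec hN]
      rw [sv_inr_om, sv_inr_om, mulVec_sv_apply] at h1
      have h2 := neg_injective h1
      rw [h2]
      simp [sv, one_apply]
    · have h1 : om (sv (Sum.inl j)) (N.mulVec (sv q)) = om (sv (Sum.inl j)) (sv q) := by
        nth_rewrite 1 [← (hfix j hj).1]
        rw [om_mulVec hN]
      rw [sv_inl_om, sv_inl_om, mulVec_sv_apply] at h1
      rw [h1]
      simp [sv, one_apply]
  have hcolid : ∀ (j : Fin n), (j : ℕ) < n - 2 → ∀ p : Idx n,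
      N p (Sum.inl j) = (1 : Matrix (Idx n) (Idx n) R) p (Sum.inl j) ∧
      N p (Sum.inr j) = (1 : Matrix (Idx n) (Idx n) R) p (Sum.inr j) := by
    intro j hj p
    have h1 := congrFun ((hfix j hj).1) p
    have h2 := congrFun ((hfix j hj).2) p
    rw [mulVec_sv_apply] at h1 h2
    constructor
    · rw [h1]
      simp [sv, one_apply]
    · rw [h2]
      simp [sv, one_apply]
  intro p q hpq
  have hB : ∀ r : Idx n,
      r ∉ ({Sum.inl ⟨n - 2, by omega⟩, Sum.inl ⟨n - 1, by omega⟩,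
           Sum.inr ⟨n - 2, by omega⟩, Sum.inr ⟨n - 1, by omega⟩} :
        Set (Idx n)) →
      (∃ j : Fin n, (j : ℕ) < n - 2 ∧ r = Sum.inl j) ∨
      (∃ j : Fin n, (j : ℕ) < n - 2 ∧ r = Sum.inr j) := by
    intro r hr
    simp only [Set.mem_insert_iff, Set.mem_singleton_iff, not_or] at hr
    obtain ⟨h1, h2, h3, h4⟩ := hr
    cases r with
    | inl j =>
        left
        refine ⟨j, ?_, rfl⟩
        have hj1 : j ≠ (⟨n - 2, by omega⟩ : Fin n) := fun h => h1 (by rw [h])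
        have hj2 : j ≠ (⟨n - 1, by omega⟩ : Fin n) := fun h => h2 (by rw [h])
        have hv1 : (j : ℕ) ≠ n - 2 := fun h => hj1 (Fin.ext h)
        have hv2 : (j : ℕ) ≠ n - 1 := fun h => hj2 (Fin.ext h)
        have := j.isLt
        omega
    | inr j =>
        right
        refine ⟨j, ?_, rfl⟩
        have hj1 : j ≠ (⟨n - 2, by omega⟩ : Fin n) := fun h => h3 (by rw [h])
        have hj2 : j ≠ (⟨n - 1, by omega⟩ : Fin n) := fun h => h4 (by rw [h])
        have hv1 : (j : ℕ) ≠ n - 2 := fun h => hj1 (Fin.ext h)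
        have hv2 : (j : ℕ) ≠ n - 1 := fun h => hj2 (Fin.ext h)
        have := j.isLt
        omega
  rcases hpq with hp | hq
  · rcases hB p hp with ⟨j, hj, rfl⟩ | ⟨j, hj, rfl⟩
    · exact (hrow j hj q).1
    · exact (hrow j hj q).2
  · rcases hB q hq with ⟨j, hj, rfl⟩ | ⟨j, hj, rfl⟩
    · exact (hcolid j hj p).1
    · exact (hcolid j hj p).2

end PID4

end Stmt16

/-- If `Sp₄(R)` and `Sp_{2n}(R)` are generated by root elements over a PID `R` and every
element of the embedded `Sp₄(R)` is a product of at most `K` conjugates of root elements,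
then every element of `Sp_{2n}(R)` is a product of at most `12(n−2) + K` conjugates of
root elements. -/


theorem stmt16 {R : Type*} [CommRing R] [IsDomain R] [IsPrincipalIdealRing R]
    {n : ℕ} (hn : 3 ≤ n) (K : ℕ)
    (hgen4 : ∀ M : Matrix (Fin 2 ⊕ Fin 2) (Fin 2 ⊕ Fin 2) R, IsSymp M →
      M ∈ Submonoid.closure (RootElems 2 R))
    (hgen2n : ∀ M : Matrix (Fin n ⊕ Fin n) (Fin n ⊕ Fin n) R, IsSymp M →
      M ∈ Submonoid.closure (RootElems n R))
    (hK : ∀ M ∈ EmbSp4 n (by omega) R,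
      ∃ L : List (Matrix (Fin n ⊕ Fin n) (Fin n ⊕ Fin n) R),
        (∀ x ∈ L, x ∈ ELQ n R) ∧ L.length ≤ K ∧ M = L.prod) :
    ∀ M : Matrix (Fin n ⊕ Fin n) (Fin n ⊕ Fin n) R, IsSymp M →
      ∃ L : List (Matrix (Fin n ⊕ Fin n) (Fin n ⊕ Fin n) R),
        (∀ x ∈ L, x ∈ ELQ n R) ∧ L.length ≤ 12 * (n - 2) + K ∧ M = L.prod := by
  intro M hM
  obtain ⟨L, hlen, hsympN, hfixN⟩ := Stmt16.iterate (n - 2) (by omega) M hM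
  obtain ⟨L', hELQ, hKlen, hprod⟩ := hK _ (Stmt16.fix_mem_EmbSp4 hn hsympN hfixN)
  refine ⟨(Stmt16.invL L).map (fun zt => Stmt16.Tv zt.1 zt.2) ++ L', ?_, ?_, ?_⟩
  · intro x hx
    rcases List.mem_append.mp hx with h | h
    · obtain ⟨zt, hzt, rfl⟩ := List.mem_map.mp h
      exact Stmt16.Tv_mem_ELQ (by omega) zt.1 zt.2
    · exact hELQ x h
  · rw [List.length_append, List.length_map, Stmt16.invL_length]
    omega
  · rw [List.prod_append]
    have h1 : ((Stmt16.invL L).map (fun zt => Stmt16.Tv zt.1 zt.2)).prod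
        = Stmt16.TvList (Stmt16.invL L) := rfl
    rw [h1, ← hprod, ← Matrix.mul_assoc, Stmt16.TvList_invL, one_mul]
end

section
/- Let R be a principal ideal domain of stable range 1 such that Sp_{2n}(R) = E(C_n,R) for some n ≥ 2. Then every element of Sp_{2n}(R) is a product of at most 9n − 6 conjugates of root elements: ‖Sp_{2n}(R)‖_{EL_Q} ≤ 9n − 6. -/
open Matrix

namespace SympWidth
variable {R : Type*} [CommRing R] {n : ℕ}

lemma J_transpose : (Jmat n R)ᵀ = -Jmat n R := by
  simp [Jmat, fromBlocks_transpose, fromBlocks_neg]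

lemma J_mul_J : Jmat n R * Jmat n R = (-1 : Matrix _ _ R) := by
  simp [Jmat, fromBlocks_multiply, fromBlocks_neg, ← fromBlocks_one]

lemma J_mulVec_inl (x : Fin n ⊕ Fin n → R) (i : Fin n) :
    (Jmat n R *ᵥ x) (Sum.inl i) = x (Sum.inr i) := by
  simp [Jmat, mulVec, dotProduct, Fintype.sum_sum_type, one_apply]

lemma J_mulVec_inr (x : Fin n ⊕ Fin n → R) (i : Fin n) :
    (Jmat n R *ᵥ x) (Sum.inr i) = -x (Sum.inl i) := by
  simp [Jmat, mulVec, dotProduct, Fintype.sum_sum_type, one_apply]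

/-- the symplectic form -/
def sw (w x : Fin n ⊕ Fin n → R) : R := w ⬝ᵥ (Jmat n R *ᵥ x)

lemma sw_eq (w x : Fin n ⊕ Fin n → R) :
    sw w x = ∑ i : Fin n, (w (Sum.inl i) * x (Sum.inr i) - w (Sum.inr i) * x (Sum.inl i)) := by
  simp [sw, dotProduct, Fintype.sum_sum_type, J_mulVec_inl, J_mulVec_inr,
    mul_neg, sub_eq_add_neg, Finset.sum_add_distrib]


@[simp] lemma sw_add_left (w w' x : Fin n ⊕ Fin n → R) :
    sw (w + w') x = sw w x + sw w' x := by
  simp [sw, add_dotProduct]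

@[simp] lemma sw_sub_left (w w' x : Fin n ⊕ Fin n → R) :
    sw (w - w') x = sw w x - sw w' x := by
  simp [sw, sub_dotProduct]

@[simp] lemma sw_smul_left (c : R) (w x : Fin n ⊕ Fin n → R) :
    sw (c • w) x = c * sw w x := by
  simp [sw, smul_dotProduct, smul_eq_mul]

@[simp] lemma sw_add_right (w x y : Fin n ⊕ Fin n → R) :
    sw w (x + y) = sw w x + sw w y := by
  simp [sw, mulVec_add, dotProduct_add]

@[simp] lemma sw_sub_right (w x y : Fin n ⊕ Fin n → R) :
    sw w (x - y) = sw w x - sw w y := by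
  simp [sw, mulVec_sub, dotProduct_sub]

@[simp] lemma sw_smul_right (c : R) (w x : Fin n ⊕ Fin n → R) :
    sw w (c • x) = c * sw w x := by
  simp [sw, mulVec_smul, dotProduct_smul, smul_eq_mul]

lemma sw_self (w : Fin n ⊕ Fin n → R) : sw w w = 0 := by
  rw [sw_eq]
  exact Finset.sum_eq_zero fun i _ => by ring

@[simp] lemma sw_single_inl_left (i : Fin n) (x : Fin n ⊕ Fin n → R) :
    sw (Pi.single (Sum.inl i) 1) x = x (Sum.inr i) := by
  rw [sw_eq]
  rw [Finset.sum_eq_single i] <;> simp +contextual [Pi.single_apply]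

@[simp] lemma sw_single_inr_left (i : Fin n) (x : Fin n ⊕ Fin n → R) :
    sw (Pi.single (Sum.inr i) 1) x = -x (Sum.inl i) := by
  rw [sw_eq]
  rw [Finset.sum_eq_single i] <;> simp +contextual [Pi.single_apply]

@[simp] lemma sw_single_inl_right (i : Fin n) (x : Fin n ⊕ Fin n → R) :
    sw x (Pi.single (Sum.inl i) 1) = -x (Sum.inr i) := by
  rw [sw_eq]
  rw [Finset.sum_eq_single i] <;> simp +contextual [Pi.single_apply]

@[simp] lemma sw_single_inr_right (i : Fin n) (x : Fin n ⊕ Fin n → R) :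
    sw x (Pi.single (Sum.inr i) 1) = x (Sum.inl i) := by
  rw [sw_eq]
  rw [Finset.sum_eq_single i] <;> simp +contextual [Pi.single_apply]

/-- symplectic transvection -/
def Tv (w : Fin n ⊕ Fin n → R) (t : R) : Matrix (Fin n ⊕ Fin n) (Fin n ⊕ Fin n) R :=
  1 + t • vecMulVec w (w ᵥ* Jmat n R)

lemma vecMulVec_mulVec (a b x : Fin n ⊕ Fin n → R) :
    vecMulVec a b *ᵥ x = (b ⬝ᵥ x) • a := by
  funext p
  simp only [vecMulVec_apply, mulVec, dotProduct, Pi.smul_apply, smul_eq_mul]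
  rw [Finset.sum_mul]
  exact Finset.sum_congr rfl fun q _ => by ring

lemma vecMul_J_dot (w x : Fin n ⊕ Fin n → R) : (w ᵥ* Jmat n R) ⬝ᵥ x = sw w x :=
  (dotProduct_mulVec w (Jmat n R) x).symm

lemma Tv_mulVec (w : Fin n ⊕ Fin n → R) (t : R) (x : Fin n ⊕ Fin n → R) :
    Tv w t *ᵥ x = x + (t * sw w x) • w := by
  simp [Tv, add_mulVec, smul_mulVec, vecMulVec_mulVec, vecMul_J_dot, smul_smul]

lemma Tv_fix {w x : Fin n ⊕ Fin n → R} (t : R) (h : sw w x = 0) : Tv w t *ᵥ x = x := by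
  simp [Tv_mulVec, h]


lemma vecMulVec_mul (a b : Fin n ⊕ Fin n → R) (g : Matrix (Fin n ⊕ Fin n) (Fin n ⊕ Fin n) R) :
    vecMulVec a b * g = vecMulVec a (b ᵥ* g) := by
  ext p q
  simp only [mul_apply, vecMulVec_apply, vecMul, dotProduct]
  rw [Finset.mul_sum]
  exact Finset.sum_congr rfl fun r _ => by ring

lemma mul_vecMulVec (g : Matrix (Fin n ⊕ Fin n) (Fin n ⊕ Fin n) R) (a b : Fin n ⊕ Fin n → R) :
    g * vecMulVec a b = vecMulVec (g *ᵥ a) b := by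
  ext p q
  simp only [mul_apply, vecMulVec_apply, mulVec, dotProduct]
  rw [Finset.sum_mul]
  exact Finset.sum_congr rfl fun r _ => by ring

lemma vecMulVec_transp (a b : Fin n ⊕ Fin n → R) :
    (vecMulVec a b)ᵀ = vecMulVec b a := by
  ext p q
  simp [vecMulVec_apply, mul_comm]

lemma vecMulVec_mul_vecMulVec (a b c d : Fin n ⊕ Fin n → R) :
    vecMulVec a b * vecMulVec c d = (b ⬝ᵥ c) • vecMulVec a d := by
  rw [vecMulVec_mul]
  ext p q
  simp only [vecMulVec_apply, Matrix.smul_apply, smul_eq_mul, vecMul, dotProduct]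
  rw [Finset.sum_mul, Finset.mul_sum]
  exact Finset.sum_congr rfl fun r _ => by ring

lemma vecMul_J_eq (w : Fin n ⊕ Fin n → R) : w ᵥ* Jmat n R = -(Jmat n R *ᵥ w) := by
  have : w ᵥ* Jmat n R = w ᵥ* (-(Jmat n R))ᵀ := by rw [← J_transpose, transpose_transpose]
  rw [this, transpose_neg, Matrix.vecMul_neg, vecMul_transpose]

lemma J_mulVec_eq (w : Fin n ⊕ Fin n → R) : Jmat n R *ᵥ w = -(w ᵥ* Jmat n R) := by
  rw [vecMul_J_eq, neg_neg]

lemma neg_vecMulVec (a b : Fin n ⊕ Fin n → R) : vecMulVec (-a) b = -vecMulVec a b := by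
  ext p q; simp [vecMulVec_apply]

lemma Tv_isSymp (w : Fin n ⊕ Fin n → R) (t : R) : IsSymp (Tv w t) := by
  set N := vecMulVec w (w ᵥ* Jmat n R) with hN
  have hNtJ : Nᵀ * Jmat n R = vecMulVec (w ᵥ* Jmat n R) (w ᵥ* Jmat n R) := by
    rw [hN, vecMulVec_transp, vecMulVec_mul]
  have hJN : Jmat n R * N = -(Nᵀ * Jmat n R) := by
    rw [hN, mul_vecMulVec, hNtJ, ← neg_vecMulVec, ← J_mulVec_eq]
  have hsw : (w ᵥ* Jmat n R) ⬝ᵥ w = 0 := by rw [vecMul_J_dot, sw_self]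
  have hNJN : Nᵀ * Jmat n R * N = 0 := by
    rw [hNtJ, hN, vecMulVec_mul_vecMulVec, hsw, zero_smul]
  have hNN : IsSymp (Tv w t) ↔ _ := Iff.rfl
  show (Tv w t)ᵀ * Jmat n R * Tv w t = Jmat n R
  have ht : (Tv w t)ᵀ = 1 + t • Nᵀ := by
    rw [Tv, transpose_add, transpose_one, transpose_smul, hN]
  rw [ht, Tv, ← hN]
  rw [add_mul, add_mul, one_mul, Matrix.smul_mul, mul_add, mul_add, mul_one, mul_one]
  rw [Matrix.mul_smul, Matrix.mul_smul, Matrix.smul_mul, hNJN, hJN]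
  simp

lemma Tv_mul_neg (w : Fin n ⊕ Fin n → R) (t : R) : Tv w t * Tv w (-t) = 1 := by
  set N := vecMulVec w (w ᵥ* Jmat n R) with hN
  have hNN : N * N = 0 := by
    rw [hN, vecMulVec_mul_vecMulVec, vecMul_J_dot, sw_self, zero_smul]
  show (1 + t • N) * (1 + (-t) • N) = 1
  rw [add_mul, one_mul, mul_add, mul_one, Matrix.smul_mul, Matrix.mul_smul, hNN]
  simp [smul_smul]

lemma isSymp_leftInv {g : Matrix (Fin n ⊕ Fin n) (Fin n ⊕ Fin n) R} (h : IsSymp g) :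
    (-(Jmat n R * gᵀ * Jmat n R)) * g = 1 := by
  have : Jmat n R * gᵀ * Jmat n R * g = Jmat n R * (gᵀ * Jmat n R * g) := by
    rw [Matrix.mul_assoc, Matrix.mul_assoc, Matrix.mul_assoc]
  rw [Matrix.neg_mul, this, h, J_mul_J]
  simp

lemma isSymp_mul_inv {g : Matrix (Fin n ⊕ Fin n) (Fin n ⊕ Fin n) R} (h : IsSymp g) :
    g * g⁻¹ = 1 := by
  have h1 := isSymp_leftInv h
  have h2 : g * (-(Jmat n R * gᵀ * Jmat n R)) = 1 := mul_eq_one_comm.mp h1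
  rw [Matrix.inv_eq_right_inv h2]
  exact h2

lemma Tv_conj {g : Matrix (Fin n ⊕ Fin n) (Fin n ⊕ Fin n) R} (h : IsSymp g)
    (u : Fin n ⊕ Fin n → R) (t : R) :
    g * Tv u t * g⁻¹ = Tv (g *ᵥ u) t := by
  have key : Tv (g *ᵥ u) t * g = g * Tv u t := by
    show (1 + t • vecMulVec (g *ᵥ u) ((g *ᵥ u) ᵥ* Jmat n R)) * g
        = g * (1 + t • vecMulVec u (u ᵥ* Jmat n R))
    rw [add_mul, one_mul, mul_add, mul_one, Matrix.smul_mul, Matrix.mul_smul]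
    rw [vecMulVec_mul, mul_vecMulVec]
    congr 2
    have : (g *ᵥ u) = u ᵥ* gᵀ := (vecMul_transpose g u).symm
    rw [vecMul_vecMul, this, vecMul_vecMul, ← Matrix.mul_assoc, h]
  calc g * Tv u t * g⁻¹ = Tv (g *ᵥ u) t * g * g⁻¹ := by rw [key]
  _ = Tv (g *ᵥ u) t * (g * g⁻¹) := by rw [Matrix.mul_assoc]
  _ = Tv (g *ᵥ u) t := by rw [isSymp_mul_inv h, mul_one]


lemma isSymp_mul {A B : Matrix (Fin n ⊕ Fin n) (Fin n ⊕ Fin n) R}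
    (hA : IsSymp A) (hB : IsSymp B) : IsSymp (A * B) := by
  show (A * B)ᵀ * Jmat n R * (A * B) = Jmat n R
  rw [transpose_mul]
  have h : Bᵀ * Aᵀ * Jmat n R * (A * B) = Bᵀ * ((Aᵀ * Jmat n R * A) * B) := by
    simp only [Matrix.mul_assoc]
  rw [h, hA, ← Matrix.mul_assoc]
  exact hB

lemma isSymp_sw {M : Matrix (Fin n ⊕ Fin n) (Fin n ⊕ Fin n) R} (h : IsSymp M)
    (x y : Fin n ⊕ Fin n → R) : sw (M *ᵥ x) (M *ᵥ y) = sw x y := by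
  unfold sw
  calc (M *ᵥ x) ⬝ᵥ (Jmat n R *ᵥ (M *ᵥ y))
      = (M *ᵥ x) ⬝ᵥ ((Jmat n R * M) *ᵥ y) := by rw [mulVec_mulVec]
  _ = ((Jmat n R * M) *ᵥ y) ⬝ᵥ (M *ᵥ x) := dotProduct_comm _ _
  _ = (((Jmat n R * M) *ᵥ y) ᵥ* M) ⬝ᵥ x := dotProduct_mulVec _ _ _
  _ = x ⬝ᵥ (Mᵀ *ᵥ ((Jmat n R * M) *ᵥ y)) := by rw [← mulVec_transpose]; exact dotProduct_comm _ _
  _ = x ⬝ᵥ ((Mᵀ * (Jmat n R * M)) *ᵥ y) := by rw [mulVec_mulVec]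
  _ = x ⬝ᵥ (Jmat n R *ᵥ y) := by rw [← Matrix.mul_assoc, h]

lemma single_vecMul_J (i : Fin n ⊕ Fin n) :
    (Pi.single i (1:R)) ᵥ* Jmat n R = Jmat n R i := by
  funext q
  simp [vecMul, dotProduct, Pi.single_apply]

lemma Tv_e_mem (i : Fin n) (t : R) :
    Tv (Pi.single (Sum.inl i) (1:R)) t ∈ RootElems n R := by
  left
  refine ⟨t, Or.inr (Or.inr ⟨i, ?_⟩)⟩
  unfold Tv
  congr 1
  rw [single_vecMul_J]
  ext p q
  simp only [Matrix.smul_apply, vecMulVec_apply, smul_eq_mul]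
  rcases p with p | p <;> rcases q with q | q <;>
    simp [Pi.single_apply, Jmat, Matrix.single, one_apply, and_comm] <;>
    by_cases h1 : i = p <;> by_cases h2 : i = q <;> simp [h1, h2] <;> aesop

lemma Tv_f_mem (i : Fin n) (t : R) :
    Tv (Pi.single (Sum.inr i) (1:R)) t ∈ RootElems n R := by
  right
  refine ⟨-t, Or.inr (Or.inr ⟨i, ?_⟩)⟩
  unfold Tv
  congr 1
  rw [single_vecMul_J]
  ext p q
  simp only [Matrix.smul_apply, vecMulVec_apply, smul_eq_mul]
  rcases p with p | p <;> rcases q with q | q <;>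
    simp [Pi.single_apply, Jmat, Matrix.single, one_apply, and_comm] <;>
    by_cases h1 : i = p <;> by_cases h2 : i = q <;> simp [h1, h2] <;> aesop


lemma Tv_mem_ELQ_e {w : Fin n ⊕ Fin n → R} {i : Fin n}
    (h : IsUnit (sw w (Pi.single (Sum.inl i) 1))) (t : R) : Tv w t ∈ ELQ n R := by
  set e : Fin n ⊕ Fin n → R := Pi.single (Sum.inl i) 1 with he
  set s : R := sw w e with hs
  obtain ⟨u, hu⟩ := h
  set g := Tv (w - e) (↑u⁻¹) with hg
  have hge : g *ᵥ e = w := by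
    rw [hg, Tv_mulVec]
    have h1 : sw (w - e) e = s := by
      rw [sw_sub_left, ← hs, he]
      simp
    rw [h1]
    have h2 : (↑u⁻¹ : R) * s = 1 := by rw [← hu]; exact Units.inv_mul u
    rw [h2, one_smul]
    abel
  refine ⟨Tv e t, Tv_e_mem i t, g, Tv_isSymp _ _, ?_⟩
  rw [Tv_conj (Tv_isSymp _ _) e t, hge]

lemma Tv_mem_ELQ_f {w : Fin n ⊕ Fin n → R} {i : Fin n}
    (h : IsUnit (sw w (Pi.single (Sum.inr i) 1))) (t : R) : Tv w t ∈ ELQ n R := by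
  set f : Fin n ⊕ Fin n → R := Pi.single (Sum.inr i) 1 with he
  set s : R := sw w f with hs
  obtain ⟨u, hu⟩ := h
  set g := Tv (w - f) (↑u⁻¹) with hg
  have hge : g *ᵥ f = w := by
    rw [hg, Tv_mulVec]
    have h1 : sw (w - f) f = s := by
      rw [sw_sub_left, ← hs, he]
      simp
    rw [h1]
    have h2 : (↑u⁻¹ : R) * s = 1 := by rw [← hu]; exact Units.inv_mul u
    rw [h2, one_smul]
    abel
  refine ⟨Tv f t, Tv_f_mem i t, g, Tv_isSymp _ _, ?_⟩
  rw [Tv_conj (Tv_isSymp _ _) f t, hge]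


lemma mulVec_single_eq (M : Matrix (Fin n ⊕ Fin n) (Fin n ⊕ Fin n) R) (p q : Fin n ⊕ Fin n) :
    (M *ᵥ Pi.single q 1) p = M p q := by
  simp [mulVec, dotProduct, Pi.single_apply]

/-- masking a vector to the coordinates `inl i (κ ≤ i)`, `inr i (κ < i)`. -/
def mask (κ : Fin n) (c : Fin n ⊕ Fin n → R) : Fin n ⊕ Fin n → R :=
  fun p => Sum.rec (fun i => if κ ≤ i then c (Sum.inl i) else 0)
    (fun i => if κ < i then c (Sum.inr i) else 0) p

@[simp] lemma mask_inl (κ : Fin n) (c : Fin n ⊕ Fin n → R) (i : Fin n) :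
    mask κ c (Sum.inl i) = if κ ≤ i then c (Sum.inl i) else 0 := rfl

@[simp] lemma mask_inr (κ : Fin n) (c : Fin n ⊕ Fin n → R) (i : Fin n) :
    mask κ c (Sum.inr i) = if κ < i then c (Sum.inr i) else 0 := rfl

lemma mask_add (κ : Fin n) (c c' : Fin n ⊕ Fin n → R) :
    mask κ (c + c') = mask κ c + mask κ c' := by
  funext p
  rcases p with i | i <;> · simp only [mask_inl, mask_inr, Pi.add_apply]; split_ifs <;> simp

lemma mask_smul (κ : Fin n) (r : R) (c : Fin n ⊕ Fin n → R) :
    mask κ (r • c) = r • mask κ c := by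
  funext p
  rcases p with i | i <;> · simp only [mask_inl, mask_inr, Pi.smul_apply, smul_eq_mul]; split_ifs <;> simp

/-- the linear functional `c ↦ ω(mask κ c, v)`. -/
def phiMap (κ : Fin n) (v : Fin n ⊕ Fin n → R) : (Fin n ⊕ Fin n → R) →ₗ[R] R where
  toFun c := sw (mask κ c) v
  map_add' c c' := by rw [mask_add, sw_add_left]
  map_smul' r c := by rw [mask_smul, sw_smul_left]; rfl

lemma mask_single_inl (κ i : Fin n) (h : κ ≤ i) :
    mask κ (Pi.single (Sum.inl i) (1:R)) = Pi.single (Sum.inl i) 1 := by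
  funext p
  rcases p with p | p
  · by_cases hp : κ ≤ p
    · simp [hp]
    · have hne : p ≠ i := fun he => hp (he ▸ h)
      simp [hp, Pi.single_apply, hne]
  · simp [Pi.single_apply]

lemma mask_single_inr (κ i : Fin n) (h : κ < i) :
    mask κ (Pi.single (Sum.inr i) (1:R)) = Pi.single (Sum.inr i) 1 := by
  funext p
  rcases p with p | p
  · simp [Pi.single_apply]
  · by_cases hp : κ < p
    · simp [hp]
    · have hne : p ≠ i := fun he => hp (he ▸ h)
      simp [hp, Pi.single_apply, hne]


/-- `M` fixes the first `k` hyperbolic pairs of basis vectors. -/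
def Fixed (k : ℕ) (M : Matrix (Fin n ⊕ Fin n) (Fin n ⊕ Fin n) R) : Prop :=
  ∀ j : Fin n, (j : ℕ) < k →
    (M *ᵥ Pi.single (Sum.inl j) 1 = Pi.single (Sum.inl j) 1) ∧
    (M *ᵥ Pi.single (Sum.inr j) 1 = Pi.single (Sum.inr j) 1)

lemma orth_of_fixed {M : Matrix (Fin n ⊕ Fin n) (Fin n ⊕ Fin n) R} (hM : IsSymp M)
    {k : ℕ} (hfix : Fixed k M) (x : Fin n ⊕ Fin n → R) (j : Fin n) (hj : (j : ℕ) < k) :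
    (M *ᵥ x) (Sum.inl j) = x (Sum.inl j) ∧ (M *ᵥ x) (Sum.inr j) = x (Sum.inr j) := by
  constructor
  · have h1 : (M *ᵥ x) (Sum.inl j) = sw (M *ᵥ x) (Pi.single (Sum.inr j) 1) :=
      (sw_single_inr_right j _).symm
    rw [h1, ← (hfix j hj).2, isSymp_sw hM, sw_single_inr_right]
  · have h1 : (M *ᵥ x) (Sum.inr j) = -sw (M *ᵥ x) (Pi.single (Sum.inl j) 1) := by
      rw [sw_single_inl_right]; ring
    rw [h1, ← (hfix j hj).1, isSymp_sw hM, sw_single_inl_right]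
    ring

lemma sum_eq_one_of_isSymp {M : Matrix (Fin n ⊕ Fin n) (Fin n ⊕ Fin n) R} (hM : IsSymp M)
    (κ : Fin n) :
    ∑ p : Fin n ⊕ Fin n,
      (-(Jmat n R * Mᵀ * Jmat n R)) (Sum.inl κ) p * (M *ᵥ Pi.single (Sum.inl κ) 1) p = 1 := by
  have h := isSymp_leftInv hM
  calc ∑ p : Fin n ⊕ Fin n,
      (-(Jmat n R * Mᵀ * Jmat n R)) (Sum.inl κ) p * (M *ᵥ Pi.single (Sum.inl κ) 1) p
      = ∑ p : Fin n ⊕ Fin n, (-(Jmat n R * Mᵀ * Jmat n R)) (Sum.inl κ) p * M p (Sum.inl κ) :=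
        Finset.sum_congr rfl fun p _ => by rw [mulVec_single_eq]
  _ = ((-(Jmat n R * Mᵀ * Jmat n R)) * M) (Sum.inl κ) (Sum.inl κ) := (Matrix.mul_apply).symm
  _ = 1 := by rw [h]; simp [Matrix.one_apply]


lemma stage [IsPrincipalIdealRing R]
    (hSR1 : ∀ v₀ v₁ : R, Ideal.span {v₀, v₁} = ⊤ → ∃ t : R, IsUnit (v₁ + t * v₀))
    (κ : Fin n) {M : Matrix (Fin n ⊕ Fin n) (Fin n ⊕ Fin n) R}
    (hM : IsSymp M) (hfix : Fixed (κ : ℕ) M) :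
    ∃ σ₁ σ₂ σ₃ σ₄ N : Matrix (Fin n ⊕ Fin n) (Fin n ⊕ Fin n) R,
      σ₁ ∈ ELQ n R ∧ σ₂ ∈ ELQ n R ∧ σ₃ ∈ ELQ n R ∧ σ₄ ∈ ELQ n R ∧
      IsSymp N ∧ Fixed ((κ : ℕ) + 1) N ∧ M = σ₁ * (σ₂ * (σ₃ * (σ₄ * N))) := by
  classical
  set e : Fin n ⊕ Fin n → R := Pi.single (Sum.inl κ) 1 with he
  set f : Fin n ⊕ Fin n → R := Pi.single (Sum.inr κ) 1 with hf
  set v : Fin n ⊕ Fin n → R := M *ᵥ e with hv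
  set a : R := v (Sum.inl κ) with ha
  set b : R := v (Sum.inr κ) with hb
  -- vanishing of early coordinates of v
  have hvz : ∀ j : Fin n, (j : ℕ) < (κ : ℕ) → v (Sum.inl j) = 0 ∧ v (Sum.inr j) = 0 := by
    intro j hj
    have hne : j ≠ κ := fun hjk => by rw [hjk] at hj; omega
    have h := orth_of_fixed hM hfix e j hj
    constructor
    · rw [hv, h.1, he, Pi.single_eq_of_ne (by simp [hne])]
    · rw [hv, h.2, he, Pi.single_eq_of_ne (by simp)]
  -- the ideal of reachable pairings
  set φ : (Fin n ⊕ Fin n → R) →ₗ[R] R := phiMap κ v with hφ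
  set Ir : Ideal R := LinearMap.range φ with hIr
  set g₀ : R := Submodule.IsPrincipal.generator Ir with hg₀
  have hg₀mem : g₀ ∈ Ir := Submodule.IsPrincipal.generator_mem Ir
  have hbmem : b ∈ Ir := by
    refine ⟨Pi.single (Sum.inl κ) 1, ?_⟩
    show sw (mask κ (Pi.single (Sum.inl κ) 1)) v = b
    rw [mask_single_inl κ κ le_rfl, sw_single_inl_left]
  have hinlmem : ∀ i : Fin n, κ < i → v (Sum.inl i) ∈ Ir := by
    intro i hi
    have : φ (-(Pi.single (Sum.inr i) 1)) = v (Sum.inl i) := by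
      rw [map_neg]
      show -sw (mask κ (Pi.single (Sum.inr i) 1)) v = v (Sum.inl i)
      rw [mask_single_inr κ i hi, sw_single_inr_left, neg_neg]
    exact ⟨_, this⟩
  have hinrmem : ∀ i : Fin n, κ ≤ i → v (Sum.inr i) ∈ Ir := by
    intro i hi
    have : φ (Pi.single (Sum.inl i) 1) = v (Sum.inr i) := by
      show sw (mask κ (Pi.single (Sum.inl i) 1)) v = v (Sum.inr i)
      rw [mask_single_inl κ i hi, sw_single_inl_left]
    exact ⟨_, this⟩
  -- the span argument
  set S : Ideal R := Ideal.span {g₀, a + b} with hS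
  have hIrS : Ir ≤ S := by
    rw [← Submodule.IsPrincipal.span_singleton_generator Ir, ← hg₀]
    apply Ideal.span_mono
    intro x hx
    simp only [Set.mem_singleton_iff] at hx
    simp [hx]
  have hvS : ∀ p : Fin n ⊕ Fin n, v p ∈ S := by
    intro p
    rcases p with i | i
    · rcases Nat.lt_trichotomy (i : ℕ) (κ : ℕ) with h | h | h
      · rw [(hvz i h).1]; exact S.zero_mem
      · have hik : i = κ := Fin.ext h
        subst hik
        have h1 : a + b ∈ S := Ideal.subset_span (by simp)
        have h2 : b ∈ S := hIrS hbmem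
        have : v (Sum.inl i) = (a + b) - b := by rw [← ha]; ring
        rw [this]
        exact S.sub_mem h1 h2
      · exact hIrS (hinlmem i (by rwa [Fin.lt_def]))
    · rcases Nat.lt_or_ge (i : ℕ) (κ : ℕ) with h | h
      · rw [(hvz i h).2]; exact S.zero_mem
      · exact hIrS (hinrmem i (by rwa [Fin.le_def]))
  have hStop : S = ⊤ := by
    rw [Ideal.eq_top_iff_one]
    have hsum := sum_eq_one_of_isSymp hM κ
    rw [← hv] at hsum
    rw [← hsum]
    exact S.sum_mem fun p _ => Ideal.mul_mem_left S _ (hvS p)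
  obtain ⟨μ, hμ⟩ := hSR1 g₀ (a + b) hStop
  set s₁ : R := a + b + μ * g₀ with hs₁def
  have hs₁ : IsUnit s₁ := by
    have : a + b + μ * g₀ = (a + b) + μ * g₀ := by ring
    rw [hs₁def, this]
    exact hμ
  -- choose z realizing -(μ * g₀)
  have hzmem : -(μ * g₀) ∈ Ir := by
    have := Ir.smul_mem (-μ) hg₀mem
    rwa [smul_eq_mul, neg_mul] at this
  obtain ⟨c, hc⟩ := hzmem
  set z : Fin n ⊕ Fin n → R := mask κ c with hz
  have hzv : sw z v = -(μ * g₀) := hc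
  have hzinl : ∀ j : Fin n, ¬ κ ≤ j → z (Sum.inl j) = 0 := by
    intro j hj; rw [hz, mask_inl, if_neg hj]
  have hzinr : ∀ j : Fin n, ¬ κ < j → z (Sum.inr j) = 0 := by
    intro j hj; rw [hz, mask_inr, if_neg hj]
  -- move 1
  set w₁ : Fin n ⊕ Fin n → R := f + z with hw₁
  have hw1rκ : w₁ (Sum.inr κ) = 1 := by
    rw [hw₁]
    simp [hf, hzinr κ (lt_irrefl κ)]
  have hw1v : sw w₁ v = -a - μ * g₀ := by
    rw [hw₁, sw_add_left, hf, sw_single_inr_left, hzv, ← ha]; ring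
  have hw1e : sw w₁ e = -1 := by
    rw [he, sw_single_inl_right, hw1rκ]
  have hw1fixl : ∀ j : Fin n, (j : ℕ) < (κ : ℕ) → sw w₁ (Pi.single (Sum.inl j) 1) = 0 := by
    intro j hj
    have hne : j ≠ κ := fun hjk => by rw [hjk] at hj; omega
    rw [sw_single_inl_right, hw₁]
    simp [hf, Pi.single_apply, hne, hzinr j (by rw [Fin.lt_def]; omega)]
  have hw1fixr : ∀ j : Fin n, (j : ℕ) < (κ : ℕ) → sw w₁ (Pi.single (Sum.inr j) 1) = 0 := by
    intro j hj
    have hne : j ≠ κ := fun hjk => by rw [hjk] at hj; omega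
    rw [sw_single_inr_right, hw₁]
    simp [hf, Pi.single_apply, hne, hzinl j (by rw [Fin.le_def]; omega)]
  set τ₁ := Tv w₁ (-1) with hτ₁
  set σ₁ := Tv w₁ 1 with hσ₁def
  have hσ₁τ₁ : σ₁ * τ₁ = 1 := Tv_mul_neg w₁ 1
  have hσ₁ELQ : σ₁ ∈ ELQ n R := Tv_mem_ELQ_e (i := κ) (by rw [← he, hw1e]; exact isUnit_one.neg) 1
  have hτ₁ELQ' : True := trivial
  set v1 : Fin n ⊕ Fin n → R := v + (a + μ * g₀) • w₁ with hv1def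
  have hv1 : τ₁ *ᵥ v = v1 := by
    rw [hτ₁, Tv_mulVec, hw1v, hv1def]
    congr 1
    rw [show (-1 : R) * (-a - μ * g₀) = a + μ * g₀ by ring]
  have hv1b : v1 (Sum.inr κ) = s₁ := by
    rw [hv1def]
    simp only [Pi.add_apply, Pi.smul_apply, smul_eq_mul]
    rw [hw1rκ, ← hb, hs₁def]; ring
  have hv1zl : ∀ j : Fin n, (j : ℕ) < (κ : ℕ) → v1 (Sum.inl j) = 0 := by
    intro j hj
    have hne : j ≠ κ := fun hjk => by rw [hjk] at hj; omega
    rw [hv1def]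
    simp only [Pi.add_apply, Pi.smul_apply, smul_eq_mul]
    rw [(hvz j hj).1, hw₁]
    simp [hf, Pi.single_apply, hne, hzinl j (by rw [Fin.le_def]; omega)]
  have hv1zr : ∀ j : Fin n, (j : ℕ) < (κ : ℕ) → v1 (Sum.inr j) = 0 := by
    intro j hj
    have hne : j ≠ κ := fun hjk => by rw [hjk] at hj; omega
    rw [hv1def]
    simp only [Pi.add_apply, Pi.smul_apply, smul_eq_mul]
    rw [(hvz j hj).2, hw₁]
    simp [hf, Pi.single_apply, hne, hzinr j (by rw [Fin.lt_def]; omega)]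
  -- move 2
  set z₂ : Fin n ⊕ Fin n → R := v1 - e with hz₂
  have hz₂e : sw z₂ e = -s₁ := by
    rw [he, sw_single_inl_right, hz₂]
    simp only [Pi.sub_apply]
    rw [hv1b, he]
    simp
  set u₁ : Rˣ := hs₁.unit with hu₁
  have hu₁spec : (u₁ : R) = s₁ := hs₁.unit_spec
  set t₂ : R := (↑u₁⁻¹ : R) with ht₂
  set τ₂ := Tv z₂ t₂ with hτ₂
  set σ₂ := Tv z₂ (-t₂) with hσ₂def
  have hσ₂τ₂ : σ₂ * τ₂ = 1 := by
    have := Tv_mul_neg z₂ (-t₂)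
    rwa [neg_neg] at this
  have hσ₂ELQ : σ₂ ∈ ELQ n R := Tv_mem_ELQ_e (i := κ) (by rw [← he, hz₂e]; exact hs₁.neg) (-t₂)
  have hτ₂v1 : τ₂ *ᵥ v1 = e := by
    rw [hτ₂, Tv_mulVec]
    have h1 : sw z₂ v1 = -s₁ := by
      rw [hz₂, sw_sub_left, sw_self, he, sw_single_inl_left, hv1b]; ring
    rw [h1]
    have h2 : t₂ * -s₁ = -1 := by
      rw [ht₂, ← hu₁spec]
      rw [mul_neg, Units.inv_mul]
    rw [h2, hz₂]
    simp
  have hz₂fixl : ∀ j : Fin n, (j : ℕ) < (κ : ℕ) → sw z₂ (Pi.single (Sum.inl j) 1) = 0 := by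
    intro j hj
    have hne : j ≠ κ := fun hjk => by rw [hjk] at hj; omega
    rw [sw_single_inl_right, hz₂]
    simp only [Pi.sub_apply]
    rw [hv1zr j hj, he]
    simp [Pi.single_apply, hne]
  have hz₂fixr : ∀ j : Fin n, (j : ℕ) < (κ : ℕ) → sw z₂ (Pi.single (Sum.inr j) 1) = 0 := by
    intro j hj
    have hne : j ≠ κ := fun hjk => by rw [hjk] at hj; omega
    rw [sw_single_inr_right, hz₂]
    simp only [Pi.sub_apply]
    rw [hv1zl j hj, he]
    simp [Pi.single_apply, hne]
  -- M' fixes previous pairs and e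
  set M' := τ₂ * (τ₁ * M) with hM'def
  have hM' : IsSymp M' := isSymp_mul (Tv_isSymp _ _) (isSymp_mul (Tv_isSymp _ _) hM)
  have hmulvec3 : ∀ x : Fin n ⊕ Fin n → R, M' *ᵥ x = τ₂ *ᵥ (τ₁ *ᵥ (M *ᵥ x)) := by
    intro x
    rw [hM'def, ← mulVec_mulVec, ← mulVec_mulVec]
  have hfix' : Fixed (κ : ℕ) M' := by
    intro j hj
    constructor
    · rw [hmulvec3, (hfix j hj).1, hτ₁, Tv_fix _ (hw1fixl j hj), hτ₂, Tv_fix _ (hz₂fixl j hj)]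
    · rw [hmulvec3, (hfix j hj).2, hτ₁, Tv_fix _ (hw1fixr j hj), hτ₂, Tv_fix _ (hz₂fixr j hj)]
  have hM'e : M' *ᵥ e = e := by
    rw [hmulvec3, ← hv, hv1, hτ₂v1]
  -- move 3
  set u : Fin n ⊕ Fin n → R := M' *ᵥ f with hu
  have huzl : ∀ j : Fin n, (j : ℕ) < (κ : ℕ) → u (Sum.inl j) = 0 ∧ u (Sum.inr j) = 0 := by
    intro j hj
    have hne : j ≠ κ := fun hjk => by rw [hjk] at hj; omega
    have h := orth_of_fixed hM' hfix' f j hj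
    constructor
    · rw [hu, h.1, hf, Pi.single_eq_of_ne (by simp)]
    · rw [hu, h.2, hf, Pi.single_eq_of_ne (by simp [hne])]
  have hurκ : u (Sum.inr κ) = 1 := by
    have h1 : sw e u = u (Sum.inr κ) := by rw [he, sw_single_inl_left]
    have h2 : sw e u = 1 := by
      conv_lhs => rw [← hM'e, hu]
      rw [isSymp_sw hM', he, hf, sw_single_inl_left, Pi.single_eq_same]
    rw [← h1, h2]
  set α : R := u (Sum.inl κ) with hα
  set r : Fin n ⊕ Fin n → R := u - α • e - f with hr
  have hrlκ : r (Sum.inl κ) = 0 := by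
    rw [hr]
    simp only [Pi.sub_apply, Pi.smul_apply, smul_eq_mul]
    rw [← hα, he, hf, Pi.single_eq_same, Pi.single_eq_of_ne (by simp)]
    ring
  have hrrκ : r (Sum.inr κ) = 0 := by
    rw [hr]
    simp only [Pi.sub_apply, Pi.smul_apply, smul_eq_mul]
    rw [hurκ, he, hf, Pi.single_eq_of_ne (by simp), Pi.single_eq_same]
    ring
  have hrzl : ∀ j : Fin n, (j : ℕ) < (κ : ℕ) → r (Sum.inl j) = 0 ∧ r (Sum.inr j) = 0 := by
    intro j hj
    have hne : j ≠ κ := fun hjk => by rw [hjk] at hj; omega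
    have h1 := (huzl j hj).1
    have h2 := (huzl j hj).2
    constructor
    · rw [hr]
      simp only [Pi.sub_apply, Pi.smul_apply, smul_eq_mul]
      rw [h1]
      simp [he, hf, Pi.single_apply, hne]
    · rw [hr]
      simp only [Pi.sub_apply, Pi.smul_apply, smul_eq_mul]
      rw [h2]
      simp [he, hf, Pi.single_apply, hne]
  have hudecomp : u = α • e + f + r := by rw [hr]; abel
  -- move 3
  set w₃ : Fin n ⊕ Fin n → R := e + r with hw₃
  have hw₃lκ : w₃ (Sum.inl κ) = 1 := by
    rw [hw₃]
    simp only [Pi.add_apply]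
    rw [he, Pi.single_eq_same, hrlκ]
    ring
  have hw₃rκ : w₃ (Sum.inr κ) = 0 := by
    rw [hw₃]
    simp only [Pi.add_apply]
    rw [he, Pi.single_eq_of_ne (by simp), hrrκ]
    ring
  have hw₃f : sw w₃ f = 1 := by rw [hf, sw_single_inr_right, hw₃lκ]
  have hw₃u : sw w₃ u = 1 := by
    rw [hw₃, sw_add_left]
    have h1 : sw e u = 1 := by rw [he, sw_single_inl_left, hurκ]
    have h2 : sw r u = 0 := by
      rw [hudecomp, sw_add_right, sw_add_right, sw_smul_right, sw_self]
      have h3 : sw r e = 0 := by rw [he, sw_single_inl_right, hrrκ, neg_zero]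
      have h4 : sw r f = 0 := by rw [hf, sw_single_inr_right, hrlκ]
      rw [h3, h4]; ring
    rw [h1, h2]; ring
  set τ₃ := Tv w₃ (-1) with hτ₃
  set σ₃ := Tv w₃ 1 with hσ₃def
  have hσ₃τ₃ : σ₃ * τ₃ = 1 := Tv_mul_neg w₃ 1
  have hσ₃ELQ : σ₃ ∈ ELQ n R :=
    Tv_mem_ELQ_f (i := κ) (by rw [← hf, hw₃f]; exact isUnit_one) 1
  set u' : Fin n ⊕ Fin n → R := u - (e + r) with hu'
  have hτ₃u : τ₃ *ᵥ u = u' := by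
    rw [hτ₃, Tv_mulVec, hw₃u, hu', ← hw₃]
    rw [show (-1 : R) * 1 = -1 by ring]
    simp [sub_eq_add_neg]
  have hw₃fixl : ∀ j : Fin n, (j : ℕ) < (κ : ℕ) → sw w₃ (Pi.single (Sum.inl j) 1) = 0 := by
    intro j hj
    have hne : j ≠ κ := fun hjk => by rw [hjk] at hj; omega
    rw [sw_single_inl_right, hw₃]
    simp only [Pi.add_apply]
    rw [he, Pi.single_eq_of_ne (by simp), (hrzl j hj).2]
    ring
  have hw₃fixr : ∀ j : Fin n, (j : ℕ) < (κ : ℕ) → sw w₃ (Pi.single (Sum.inr j) 1) = 0 := by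
    intro j hj
    have hne : j ≠ κ := fun hjk => by rw [hjk] at hj; omega
    rw [sw_single_inr_right, hw₃]
    simp only [Pi.add_apply]
    rw [he, Pi.single_eq_of_ne (by simp [hne]), (hrzl j hj).1]
    ring
  have hw₃fixe : sw w₃ e = 0 := by
    rw [he, sw_single_inl_right, hw₃]
    simp only [Pi.add_apply]
    rw [he, Pi.single_eq_of_ne (by simp), hrrκ]
    ring
  -- move 4
  set τ₄ := Tv e (1 - α) with hτ₄
  set σ₄ := Tv e (α - 1) with hσ₄def
  have hσ₄τ₄ : σ₄ * τ₄ = 1 := by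
    have := Tv_mul_neg e (α - 1)
    rwa [show -(α - 1) = 1 - α by ring] at this
  have hef : sw e f = 1 := by rw [he, hf, sw_single_inl_left, Pi.single_eq_same]
  have hσ₄ELQ : σ₄ ∈ ELQ n R :=
    Tv_mem_ELQ_f (i := κ) (by rw [← hf, hef]; exact isUnit_one) (α - 1)
  have hτ₄u' : τ₄ *ᵥ u' = f := by
    rw [hτ₄, Tv_mulVec]
    have h1 : sw e u' = 1 := by
      rw [hu', sw_sub_right, sw_add_right]
      have h2 : sw e u = 1 := by rw [he, sw_single_inl_left, hurκ]
      have h3 : sw e e = 0 := sw_self e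
      have h4 : sw e r = 0 := by rw [he, sw_single_inl_left, hrrκ]
      rw [h2, h3, h4]; ring
    rw [h1, mul_one, hu', hudecomp]
    funext p
    simp only [Pi.add_apply, Pi.sub_apply, Pi.smul_apply, smul_eq_mul]
    ring
  have hτ₄fixl : ∀ j : Fin n, (j : ℕ) < (κ : ℕ) → sw e (Pi.single (Sum.inl j) 1) = 0 := by
    intro j hj
    rw [sw_single_inl_right, he, Pi.single_eq_of_ne (by simp), neg_zero]
  have hτ₄fixr : ∀ j : Fin n, (j : ℕ) < (κ : ℕ) → sw e (Pi.single (Sum.inr j) 1) = 0 := by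
    intro j hj
    have hne : j ≠ κ := fun hjk => by rw [hjk] at hj; omega
    rw [sw_single_inr_right, he, Pi.single_eq_of_ne (by simp [hne])]
  have hτ₄fixe : sw e e = 0 := sw_self e
  -- assemble
  set N := τ₄ * (τ₃ * M') with hN
  have hNsymp : IsSymp N := isSymp_mul (Tv_isSymp _ _) (isSymp_mul (Tv_isSymp _ _) hM')
  have hmulvecN : ∀ x : Fin n ⊕ Fin n → R, N *ᵥ x = τ₄ *ᵥ (τ₃ *ᵥ (M' *ᵥ x)) := by
    intro x
    rw [hN, ← mulVec_mulVec, ← mulVec_mulVec]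
  have hNfix : Fixed ((κ : ℕ) + 1) N := by
    intro j hj
    rcases Nat.lt_or_ge (j : ℕ) (κ : ℕ) with h | h
    · constructor
      · rw [hmulvecN, (hfix' j h).1, hτ₃, Tv_fix _ (hw₃fixl j h), hτ₄, Tv_fix _ (hτ₄fixl j h)]
      · rw [hmulvecN, (hfix' j h).2, hτ₃, Tv_fix _ (hw₃fixr j h), hτ₄, Tv_fix _ (hτ₄fixr j h)]
    · have hjκ : j = κ := Fin.ext (by omega)
      subst hjκ
      constructor
      · rw [hmulvecN, ← he, hM'e, hτ₃, Tv_fix _ hw₃fixe, hτ₄, Tv_fix _ hτ₄fixe, he]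
      · rw [hmulvecN, ← hf, ← hu, hτ₃, hτ₃u, hτ₄, hτ₄u', hf]
  refine ⟨σ₁, σ₂, σ₃, σ₄, N, hσ₁ELQ, hσ₂ELQ, hσ₃ELQ, hσ₄ELQ, hNsymp, hNfix, ?_⟩
  have cancel : ∀ σ τ X : Matrix (Fin n ⊕ Fin n) (Fin n ⊕ Fin n) R,
      σ * τ = 1 → σ * (τ * X) = X := by
    intro σ τ X h
    rw [← Matrix.mul_assoc, h, one_mul]
  have e4 : σ₄ * N = τ₃ * M' := by rw [hN]; exact cancel _ _ _ hσ₄τ₄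
  have e3 : σ₃ * (τ₃ * M') = M' := cancel _ _ _ hσ₃τ₃
  have e2 : σ₂ * M' = τ₁ * M := by rw [hM'def]; exact cancel _ _ _ hσ₂τ₂
  have e1 : σ₁ * (τ₁ * M) = M := cancel _ _ _ hσ₁τ₁
  rw [e4, e3, e2, e1]

lemma reduce [IsPrincipalIdealRing R]
    (hSR1 : ∀ v₀ v₁ : R, Ideal.span {v₀, v₁} = ⊤ → ∃ t : R, IsUnit (v₁ + t * v₀)) :
    ∀ m k : ℕ, k + m = n → ∀ M : Matrix (Fin n ⊕ Fin n) (Fin n ⊕ Fin n) R,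
      IsSymp M → Fixed k M →
      ∃ L : List (Matrix (Fin n ⊕ Fin n) (Fin n ⊕ Fin n) R),
        (∀ x ∈ L, x ∈ ELQ n R) ∧ L.length ≤ 4 * m ∧ M = L.prod := by
  intro m
  induction m with
  | zero =>
    intro k hk M hM hfix
    have hone : M = 1 := by
      ext p q
      have hq : ∀ j : Fin n, (j : ℕ) < k := by
        intro j
        have := j.isLt
        omega
      rcases q with j | j
      · have h := congrFun (hfix j (hq j)).1 p
        rw [mulVec_single_eq] at h
        rw [h]
        by_cases hp : p = Sum.inl j <;> simp [Matrix.one_apply, Pi.single_apply, hp]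
      · have h := congrFun (hfix j (hq j)).2 p
        rw [mulVec_single_eq] at h
        rw [h]
        by_cases hp : p = Sum.inr j <;> simp [Matrix.one_apply, Pi.single_apply, hp]
    exact ⟨[], by simp, by simp, by simp [hone]⟩
  | succ m ih =>
    intro k hk M hM hfix
    have hkn : k < n := by omega
    obtain ⟨σ₁, σ₂, σ₃, σ₄, N, h1, h2, h3, h4, hN, hNfix, heq⟩ :=
      stage hSR1 ⟨k, hkn⟩ hM hfix
    obtain ⟨L, hL, hlen, hprod⟩ := ih (k + 1) (by omega) N hN hNfix
    refine ⟨σ₁ :: σ₂ :: σ₃ :: σ₄ :: L, ?_, ?_, ?_⟩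
    · intro x hx
      simp only [List.mem_cons] at hx
      rcases hx with rfl | rfl | rfl | rfl | h
      · exact h1
      · exact h2
      · exact h3
      · exact h4
      · exact hL _ h
    · simp only [List.length_cons]
      omega
    · simp only [List.prod_cons]
      rw [heq, hprod]

end SympWidth


/-- If `R` is a PID of stable range `1` with `Sp_{2n}(R) = E(C_n,R)`, then every element
of `Sp_{2n}(R)` is a product of at most `9n − 6` conjugates of root elements. -/
theorem stmt17 {R : Type*} [CommRing R] [IsDomain R] [IsPrincipalIdealRing R]
    {n : ℕ} (hn : 2 ≤ n)
    (hSR1 : ∀ v₀ v₁ : R, Ideal.span {v₀, v₁} = ⊤ → ∃ t : R, IsUnit (v₁ + t * v₀))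
    (hgen : ∀ M : Matrix (Fin n ⊕ Fin n) (Fin n ⊕ Fin n) R, IsSymp M →
      M ∈ Submonoid.closure (RootElems n R)) :
    ∀ M : Matrix (Fin n ⊕ Fin n) (Fin n ⊕ Fin n) R, IsSymp M →
      ∃ L : List (Matrix (Fin n ⊕ Fin n) (Fin n ⊕ Fin n) R),
        (∀ x ∈ L, x ∈ ELQ n R) ∧ L.length ≤ 9 * n - 6 ∧ M = L.prod := by
  intro M hM
  obtain ⟨L, hL, hlen, hprod⟩ := SympWidth.reduce hSR1 n 0 (by omega) M hM
    (fun j hj => absurd hj (Nat.not_lt_zero _))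
  exact ⟨L, hL, by omega, hprod⟩
end
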